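/- arXiv:2511.09220 — 6 statements merged into one kernel-verified Lean document; each statement's English description precedes it below -/
import Mathlib

section
/- Fix constants 0 < λ1 < λ2. Let γ^N, γ : [0,∞) → ℝ be functions and let η^N, η ∈ Λ^{λ1,λ2}. Suppose there exist continuous strictly increasing bijections λ^N : [0,∞) → [0,∞) with λ^N(0) = 0 such that, for every T > 0, sup_{t≤T} |λ^N(t) − t| → 0 and sup_{t≤T} |γ^N(λ^N(t)) − γ(t)| → 0 as N → ∞, and suppose sup_{t≤T} |η^N(t) − η(t)| → 0 for every T > 0. Then the functions λ̃^N := (η^N)^{-1} ∘ λ^N ∘ η are continuous strictly increasing bijections of [0,∞) with λ̃^N(0) = 0, and for every T > 0 one has sup_{t≤T} |λ̃^N(t) − t| → 0 and sup_{t≤T} |γ^N(η^N(λ̃^N(t))) − γ(η(t))| → 0 as N → ∞. -/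
open Filter Topology Set

/-- Fix constants `0 < λ1 < λ2`. Let `γ^N, γ : [0,∞) → ℝ` and
`η^N, η ∈ Λ^{λ1,λ2}` (encoded by `η 0 = 0` together with the bi-Lipschitz bounds
`λ1 (t-s) ≤ η t - η s ≤ λ2 (t-s)` on `[0,∞)`, with inverses `ηinv` on `[0,∞)`).
Suppose there are continuous strictly increasing bijections `λ^N` of `[0,∞)` with
`λ^N 0 = 0` such that `sup_{t≤T} |λ^N t - t| → 0` and
`sup_{t≤T} |γ^N (λ^N t) - γ t| → 0` for every `T > 0`, and that
`sup_{t≤T} |η^N t - η t| → 0` for every `T > 0`. Then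
`λ̃^N := (η^N)⁻¹ ∘ λ^N ∘ η` are continuous strictly increasing bijections of `[0,∞)`
with `λ̃^N 0 = 0`, and for every `T > 0`,
`sup_{t≤T} |λ̃^N t - t| → 0` and `sup_{t≤T} |γ^N (η^N (λ̃^N t)) - γ (η t)| → 0`. -/
theorem stmt1 (lam1 lam2 : ℝ) (hl1 : 0 < lam1) (hl12 : lam1 < lam2)
    (γN : ℕ → ℝ → ℝ) (γ : ℝ → ℝ)
    (ηN : ℕ → ℝ → ℝ) (η : ℝ → ℝ) (ηNinv : ℕ → ℝ → ℝ)
    -- η^N, η ∈ Λ^{λ1,λ2}: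
    (hηN0 : ∀ N, ηN N 0 = 0)
    (hηNlip : ∀ N, ∀ s t : ℝ, 0 ≤ s → s < t →
      lam1 * (t - s) ≤ ηN N t - ηN N s ∧ ηN N t - ηN N s ≤ lam2 * (t - s))
    (hη0 : η 0 = 0)
    (hηlip : ∀ s t : ℝ, 0 ≤ s → s < t →
      lam1 * (t - s) ≤ η t - η s ∧ η t - η s ≤ lam2 * (t - s))
    -- the inverse of η^N as a bijection of [0,∞):
    (hinv_left : ∀ N, ∀ t : ℝ, 0 ≤ t → ηNinv N (ηN N t) = t)
    (hinv_right : ∀ N, ∀ x : ℝ, 0 ≤ x → ηN N (ηNinv N x) = x)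
    (hinv_nonneg : ∀ N, ∀ x : ℝ, 0 ≤ x → 0 ≤ ηNinv N x)
    -- the time changes λ^N : continuous strictly increasing bijections of [0,∞), λ^N 0 = 0:
    (lam : ℕ → ℝ → ℝ)
    (hlam0 : ∀ N, lam N 0 = 0)
    (hlamcont : ∀ N, ContinuousOn (lam N) (Ici 0))
    (hlammono : ∀ N, StrictMonoOn (lam N) (Ici 0))
    (hlammaps : ∀ N, MapsTo (lam N) (Ici 0) (Ici 0))
    (hlamsurj : ∀ N, SurjOn (lam N) (Ici 0) (Ici 0))
    -- the convergence hypotheses: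
    (hlamconv : ∀ T : ℝ, 0 < T →
      TendstoUniformlyOn (fun N => lam N) id atTop (Icc 0 T))
    (hγconv : ∀ T : ℝ, 0 < T →
      TendstoUniformlyOn (fun N t => γN N (lam N t)) γ atTop (Icc 0 T))
    (hηconv : ∀ T : ℝ, 0 < T →
      TendstoUniformlyOn (fun N => ηN N) η atTop (Icc 0 T)) :
    (∀ N, ηNinv N (lam N (η 0)) = 0) ∧
    (∀ N, ContinuousOn (fun t => ηNinv N (lam N (η t))) (Ici 0)) ∧
    (∀ N, StrictMonoOn (fun t => ηNinv N (lam N (η t))) (Ici 0)) ∧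
    (∀ N, MapsTo (fun t => ηNinv N (lam N (η t))) (Ici 0) (Ici 0)) ∧
    (∀ N, SurjOn (fun t => ηNinv N (lam N (η t))) (Ici 0) (Ici 0)) ∧
    (∀ T : ℝ, 0 < T →
      TendstoUniformlyOn (fun N t => ηNinv N (lam N (η t))) id atTop (Icc 0 T)) ∧
    (∀ T : ℝ, 0 < T →
      TendstoUniformlyOn (fun N t => γN N (ηN N (ηNinv N (lam N (η t)))))
        (fun t => γ (η t)) atTop (Icc 0 T)) := by
  -- basic facts about η and ηN
  have hl1' : (0:ℝ) < lam2 := lt_trans hl1 hl12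
  have hηmono : StrictMonoOn η (Ici 0) := by
    intro s hs t ht hst
    have := (hηlip s t hs hst).1
    simp only [mem_Ici] at hs
    nlinarith
  have hηNmono : ∀ N, StrictMonoOn (ηN N) (Ici 0) := by
    intro N s hs t ht hst
    have := (hηNlip N s t hs hst).1
    simp only [mem_Ici] at hs
    nlinarith
  have hηnonneg : ∀ t, 0 ≤ t → 0 ≤ η t := by
    intro t ht
    rcases eq_or_lt_of_le ht with h | h
    · simp [← h, hη0]
    · have := (hηlip 0 t le_rfl h).1
      nlinarith
  have hηle : ∀ t, 0 ≤ t → η t ≤ lam2 * t := by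
    intro t ht
    rcases eq_or_lt_of_le ht with h | h
    · simp [← h, hη0]
    · have := (hηlip 0 t le_rfl h).2
      rw [hη0] at this
      linarith [this]
  have hηNnonneg : ∀ N t, 0 ≤ t → 0 ≤ ηN N t := by
    intro N t ht
    rcases eq_or_lt_of_le ht with h | h
    · simp [← h, hηN0]
    · have := (hηNlip N 0 t le_rfl h).1
      rw [hηN0] at this
      nlinarith
  -- Lipschitz bound for the inverse
  have hinvlip : ∀ N x y, 0 ≤ x → 0 ≤ y →
      |ηNinv N x - ηNinv N y| ≤ (1/lam1) * |x - y| := by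
    have key : ∀ N x y, 0 ≤ x → 0 ≤ y → x ≤ y →
        ηNinv N x ≤ ηNinv N y ∧ lam1 * (ηNinv N y - ηNinv N x) ≤ y - x := by
      intro N x y hx hy hxy
      rcases eq_or_lt_of_le hxy with h | h
      · subst h; simp
      · have ha := hinv_nonneg N x hx
        have hb := hinv_nonneg N y hy
        have hab : ηNinv N x < ηNinv N y := by
          by_contra hc
          push_neg at hc
          rcases eq_or_lt_of_le hc with h2 | h2
          · rw [← hinv_right N x hx, ← hinv_right N y hy, ← h2] at h
            exact lt_irrefl _ h
          · have := hηNmono N hb ha h2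
            rw [hinv_right N x hx, hinv_right N y hy] at this
            linarith
        have := (hηNlip N _ _ ha hab).1
        rw [hinv_right N x hx, hinv_right N y hy] at this
        exact ⟨le_of_lt hab, this⟩
    intro N x y hx hy
    rcases le_total x y with h | h
    · obtain ⟨h1, h2⟩ := key N x y hx hy h
      rw [abs_of_nonpos (by linarith), abs_of_nonpos (by linarith)]
      rw [div_mul_eq_mul_div, one_mul, le_div_iff₀ hl1]
      nlinarith
    · obtain ⟨h1, h2⟩ := key N y x hy hx h
      rw [abs_of_nonneg (by linarith), abs_of_nonneg (by linarith)]
      rw [div_mul_eq_mul_div, one_mul, le_div_iff₀ hl1]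
      nlinarith
  have hinvmono : ∀ N, StrictMonoOn (ηNinv N) (Ici 0) := by
    intro N x hx y hy hxy
    simp only [mem_Ici] at hx hy
    have ha := hinv_nonneg N x hx
    have hb := hinv_nonneg N y hy
    by_contra hc
    push_neg at hc
    rcases eq_or_lt_of_le hc with h2 | h2
    · rw [← hinv_right N x hx, ← hinv_right N y hy, h2] at hxy
      exact lt_irrefl _ hxy
    · have := hηNmono N hb ha h2
      rw [hinv_right N x hx, hinv_right N y hy] at this
      linarith
  -- continuity of η on Ici 0
  have hηcont : ContinuousOn η (Ici 0) := by
    have : LipschitzOnWith (Real.toNNReal lam2) η (Ici 0) := by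
      apply LipschitzOnWith.of_dist_le_mul
      intro x hx y hy
      simp only [mem_Ici] at hx hy
      rw [Real.dist_eq, Real.dist_eq, Real.coe_toNNReal _ (le_of_lt hl1')]
      rcases lt_trichotomy x y with h | h | h
      · have h1 := (hηlip x y hx h).1
        have h2 := (hηlip x y hx h).2
        rw [abs_of_nonpos (by nlinarith), abs_of_nonpos (by linarith)]
        nlinarith
      · simp [h]
      · have h1 := (hηlip y x hy h).1
        have h2 := (hηlip y x hy h).2
        rw [abs_of_nonneg (by nlinarith), abs_of_nonneg (by linarith)]
        nlinarith
    exact this.continuousOn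
  -- continuity of ηNinv on Ici 0
  have hinvcont : ∀ N, ContinuousOn (ηNinv N) (Ici 0) := by
    intro N
    have : LipschitzOnWith (Real.toNNReal (1/lam1)) (ηNinv N) (Ici 0) := by
      apply LipschitzOnWith.of_dist_le_mul
      intro x hx y hy
      simp only [mem_Ici] at hx hy
      rw [Real.dist_eq, Real.dist_eq,
        Real.coe_toNNReal _ (by positivity : (0:ℝ) ≤ 1/lam1)]
      exact hinvlip N x y hx hy
    exact this.continuousOn
  -- maps-to facts
  have hηmaps : MapsTo η (Ici 0) (Ici 0) := fun t ht => hηnonneg t ht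
  have hcompmaps : ∀ N, MapsTo (fun t => lam N (η t)) (Ici 0) (Ici 0) :=
    fun N t ht => hlammaps N (hηmaps ht)
  -- surjectivity of η
  have hηsurj : SurjOn η (Ici 0) (Ici 0) := by
    intro u hu
    simp only [mem_Ici] at hu
    rcases eq_or_lt_of_le hu with h | h
    · exact ⟨0, mem_Ici.mpr le_rfl, by rw [hη0, ← h]⟩
    · have hb : (0:ℝ) < u / lam1 := by positivity
      have hub : u ≤ η (u / lam1) := by
        have := (hηlip 0 (u / lam1) le_rfl hb).1
        rw [hη0] at this
        rw [sub_zero, sub_zero] at this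
        calc u = lam1 * (u / lam1) := by field_simp
        _ ≤ η (u / lam1) := this
      have hIVT := intermediate_value_Icc (le_of_lt hb)
        (hηcont.mono (Icc_subset_Ici_self))
      have : u ∈ Icc (η 0) (η (u / lam1)) := ⟨by rw [hη0]; exact hu, hub⟩
      obtain ⟨t, ht, hte⟩ := hIVT this
      exact ⟨t, ht.1, hte⟩
  refine ⟨?_, ?_, ?_, ?_, ?_, ?_, ?_⟩
  · -- value at 0
    intro N
    rw [hη0, hlam0 N]
    conv_lhs => rw [← hηN0 N]
    exact hinv_left N 0 le_rfl
  · -- continuity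
    intro N
    exact (hinvcont N).comp ((hlamcont N).comp hηcont hηmaps) (hcompmaps N)
  · -- strict monotonicity
    intro N
    intro s hs t ht hst
    exact hinvmono N (hcompmaps N hs) (hcompmaps N ht)
      (hlammono N (hηmaps hs) (hηmaps ht) (hηmono hs ht hst))
  · -- maps to
    intro N t ht
    exact hinv_nonneg N _ (hcompmaps N ht)
  · -- surjectivity
    intro N y hy
    simp only [mem_Ici] at hy
    have hx : 0 ≤ ηN N y := hηNnonneg N y hy
    obtain ⟨u, hu, hue⟩ := hlamsurj N (mem_Ici.mpr hx)
    obtain ⟨t, htm, hte⟩ := hηsurj hu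
    refine ⟨t, htm, ?_⟩
    simp only
    rw [hte, hue, hinv_left N y hy]
  · -- uniform convergence of the time change to id
    intro T hT
    rw [Metric.tendstoUniformlyOn_iff]
    intro ε hε
    have hε2 : 0 < lam1 * ε / 2 := by positivity
    have h1 := (Metric.tendstoUniformlyOn_iff.mp
      (hlamconv (lam2 * T) (by positivity))) (lam1 * ε / 2) hε2
    have h2 := (Metric.tendstoUniformlyOn_iff.mp (hηconv T hT)) (lam1 * ε / 2) hε2
    filter_upwards [h1, h2] with N hN1 hN2 t ht
    have ht0 : (0:ℝ) ≤ t := ht.1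
    have hηt : η t ∈ Icc 0 (lam2 * T) :=
      ⟨hηnonneg t ht0, le_trans (hηle t ht0) (by nlinarith [ht.2])⟩
    have hd1 : |η t - lam N (η t)| < lam1 * ε / 2 := by
      have := hN1 (η t) hηt
      rwa [Real.dist_eq] at this
    have hd2 : |η t - ηN N t| < lam1 * ε / 2 := by
      have := hN2 t ht
      rwa [Real.dist_eq] at this
    rw [id, Real.dist_eq]
    have hrw : t = ηNinv N (ηN N t) := (hinv_left N t ht0).symm
    calc |t - ηNinv N (lam N (η t))|
        = |ηNinv N (ηN N t) - ηNinv N (lam N (η t))| := by rw [← hrw]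
      _ ≤ (1/lam1) * |ηN N t - lam N (η t)| :=
          hinvlip N _ _ (hηNnonneg N t ht0) (hcompmaps N ht0)
      _ ≤ (1/lam1) * (|ηN N t - η t| + |η t - lam N (η t)|) := by
          gcongr
          exact (abs_sub_le _ _ _)
      _ < ε := by
          rw [abs_sub_comm (ηN N t) (η t)]
          rw [div_mul_eq_mul_div, one_mul, div_lt_iff₀ hl1]
          nlinarith
  · -- uniform convergence of γ composed
    intro T hT
    have hcomp := (hγconv (lam2 * T) (by positivity)).comp η
    have hsub : Icc 0 T ⊆ η ⁻¹' (Icc 0 (lam2 * T)) := by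
      intro t ht
      exact ⟨hηnonneg t ht.1, le_trans (hηle t ht.1) (by nlinarith [ht.2])⟩
    have h1 : TendstoUniformlyOn (fun N t => γN N (lam N (η t)))
        (fun t => γ (η t)) atTop (Icc 0 T) := hcomp.mono hsub
    apply h1.congr
    filter_upwards with N t ht
    simp only
    rw [hinv_right N _ (hcompmaps N ht.1)]
end

section
/- Fix constants 0 < λ1 < λ2. Let η', η ∈ Λ^{λ1,λ2} and let λ : [0,∞) → [0,∞) be any function. Then for every T > 0, sup_{t≤T} |(η')^{-1}(λ(η(t))) − t| ≤ (1/λ1) ( sup_{s ≤ λ2·T} |λ(s) − s| + sup_{t≤T} |η(t) − η'(t)| ). In particular, the inverse of any element η' of Λ^{λ1,λ2} satisfies (η')^{-1}(x) − (η')^{-1}(y) ≤ (x−y)/λ1 for all 0 ≤ y < x. -/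
open Filter Topology Set

/-- Fix `0 < λ1 < λ2`. Let `η', η ∈ Λ^{λ1,λ2}` (encoded by vanishing at `0`
and the bi-Lipschitz bounds on `[0,∞)`, with `η'inv` the inverse of `η'` as a bijection of
`[0,∞)`) and let `λ : [0,∞) → [0,∞)` be any function. Then for every `T > 0`,
`sup_{t≤T} |η'⁻¹(λ(η t)) − t| ≤ (1/λ1) (sup_{s ≤ λ2 T} |λ s − s| + sup_{t≤T} |η t − η' t|)`
(the suprema are taken in `ℝ≥0∞` so that they are always well defined), and the inverse of
`η'` satisfies `η'⁻¹ x − η'⁻¹ y ≤ (x − y)/λ1` for all `0 ≤ y < x`. -/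
theorem stmt2 (lam1 lam2 : ℝ) (hl1 : 0 < lam1) (hl12 : lam1 < lam2)
    (η' η : ℝ → ℝ) (η'inv : ℝ → ℝ)
    (hη'0 : η' 0 = 0)
    (hη'lip : ∀ s t : ℝ, 0 ≤ s → s < t →
      lam1 * (t - s) ≤ η' t - η' s ∧ η' t - η' s ≤ lam2 * (t - s))
    (hη0 : η 0 = 0)
    (hηlip : ∀ s t : ℝ, 0 ≤ s → s < t →
      lam1 * (t - s) ≤ η t - η s ∧ η t - η s ≤ lam2 * (t - s))
    (hinv_left : ∀ t : ℝ, 0 ≤ t → η'inv (η' t) = t)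
    (hinv_right : ∀ x : ℝ, 0 ≤ x → η' (η'inv x) = x)
    (hinv_nonneg : ∀ x : ℝ, 0 ≤ x → 0 ≤ η'inv x)
    (lam : ℝ → ℝ) (hlam : MapsTo lam (Ici 0) (Ici 0)) :
    (∀ T : ℝ, 0 < T →
      (⨆ t ∈ Icc (0:ℝ) T, ENNReal.ofReal |η'inv (lam (η t)) - t|) ≤
        ENNReal.ofReal (1 / lam1) *
          ((⨆ s ∈ Icc (0:ℝ) (lam2 * T), ENNReal.ofReal |lam s - s|) +
            ⨆ t ∈ Icc (0:ℝ) T, ENNReal.ofReal |η t - η' t|)) ∧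
    (∀ x y : ℝ, 0 ≤ y → y < x → η'inv x - η'inv y ≤ (x - y) / lam1) := by
  -- basic facts
  have hη'mono : ∀ s t : ℝ, 0 ≤ s → s < t → η' s < η' t := by
    intro s t hs hst
    have := (hη'lip s t hs hst).1
    nlinarith
  have hη'nonneg : ∀ t : ℝ, 0 ≤ t → 0 ≤ η' t := by
    intro t ht
    rcases eq_or_lt_of_le ht with h | h
    · rw [← h, hη'0]
    · have := hη'mono 0 t le_rfl h; linarith [hη'0]
  have hmono : ∀ x y : ℝ, 0 ≤ y → y ≤ x → η'inv y ≤ η'inv x := by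
    intro x y hy hxy
    by_contra h
    push_neg at h
    have h2 := hη'mono (η'inv x) (η'inv y) (hinv_nonneg x (hy.trans hxy)) h
    rw [hinv_right x (hy.trans hxy), hinv_right y hy] at h2
    linarith
  have key : ∀ x y : ℝ, 0 ≤ y → y ≤ x → η'inv x - η'inv y ≤ (x - y) / lam1 := by
    intro x y hy hxy
    rcases eq_or_lt_of_le hxy with h | h
    · rw [← h]; simp [le_div_iff₀ hl1]
    · have hx : 0 ≤ x := hy.trans hxy
      have ha := hinv_nonneg y hy
      have hab : η'inv y < η'inv x := by
        rcases eq_or_lt_of_le (hmono x y hy hxy) with h2 | h2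
        · exfalso
          have := congrArg η' h2
          rw [hinv_right y hy, hinv_right x hx] at this
          linarith
        · exact h2
      have h3 := (hη'lip (η'inv y) (η'inv x) ha hab).1
      rw [hinv_right y hy, hinv_right x hx] at h3
      rw [le_div_iff₀ hl1]
      nlinarith
  have habs : ∀ x y : ℝ, 0 ≤ x → 0 ≤ y → |η'inv x - η'inv y| ≤ |x - y| / lam1 := by
    intro x y hx hy
    rcases le_total y x with h | h
    · rw [abs_of_nonneg (by linarith [hmono x y hy h]), abs_of_nonneg (by linarith)]
      exact key x y hy h
    · rw [abs_of_nonpos (by linarith [hmono y x hx h]), abs_of_nonpos (by linarith)]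
      have := key y x hx h
      rw [neg_sub, neg_sub]
      linarith [this]
  constructor
  · intro T hT
    refine iSup₂_le fun t ht => ?_
    have ht0 : 0 ≤ t := ht.1
    have hηt0 : 0 ≤ η t := by
      rcases eq_or_lt_of_le ht0 with h | h
      · rw [← h, hη0]
      · have := (hηlip 0 t le_rfl h).1; nlinarith [hη0]
    have hηtle : η t ≤ lam2 * T := by
      rcases eq_or_lt_of_le ht0 with h | h
      · rw [← h, hη0]; nlinarith
      · have := (hηlip 0 t le_rfl h).2
        rw [hη0] at this
        nlinarith [ht.2, hl1.trans hl12]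
    have hlamt : 0 ≤ lam (η t) := hlam hηt0
    have hη't0 : 0 ≤ η' t := hη'nonneg t ht0
    have h1 : |η'inv (lam (η t)) - t| ≤ (|lam (η t) - η t| + |η t - η' t|) / lam1 := by
      calc |η'inv (lam (η t)) - t| = |η'inv (lam (η t)) - η'inv (η' t)| := by
            rw [hinv_left t ht0]
        _ ≤ |lam (η t) - η' t| / lam1 := habs _ _ hlamt hη't0
        _ ≤ (|lam (η t) - η t| + |η t - η' t|) / lam1 := by
            gcongr
            exact abs_sub_le _ _ _
    have h2 : ENNReal.ofReal ((|lam (η t) - η t| + |η t - η' t|) / lam1)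
        = ENNReal.ofReal (1 / lam1) *
          (ENNReal.ofReal |lam (η t) - η t| + ENNReal.ofReal |η t - η' t|) := by
      rw [div_eq_mul_inv, mul_comm, ← ENNReal.ofReal_add (abs_nonneg _) (abs_nonneg _),
        one_div, ← ENNReal.ofReal_mul (by positivity)]
    calc ENNReal.ofReal |η'inv (lam (η t)) - t|
        ≤ ENNReal.ofReal ((|lam (η t) - η t| + |η t - η' t|) / lam1) :=
          ENNReal.ofReal_le_ofReal h1
      _ = ENNReal.ofReal (1 / lam1) *
          (ENNReal.ofReal |lam (η t) - η t| + ENNReal.ofReal |η t - η' t|) := h2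
      _ ≤ _ := by
          gcongr
          · exact le_iSup₂_of_le (η t) ⟨hηt0, hηtle⟩ le_rfl
          · exact le_iSup₂_of_le t ht le_rfl
  · intro x y hy hxy
    exact key x y hy hxy.le
end

section
/- Let α ∈ (0,2) and a₊, a₋ ≥ 0, and let ν be a probability measure on ℝ satisfying the stable tail condition of index α with parameters a₊, a₋. Then for every bounded continuous function G : ℝ → ℝ that vanishes on a neighborhood of 0, lim_{n→∞} n ∫_ℝ G(u · n^{−1/α}) ν(du) = ∫_{(0,∞)} G(z) a₊ z^{−α−1} dz + ∫_{(−∞,0)} G(z) a₋ |z|^{−α−1} dz. -/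
open MeasureTheory Filter Topology Set
open scoped ENNReal NNReal

private lemma partition_integral (μ : Measure ℝ) (f : ℝ → ℝ) (c : ℕ → ℝ)
    (hc : Monotone c) (K : ℕ) (hint : IntegrableOn f (Ioc (c 0) (c K)) μ) :
    ∫ z in Ioc (c 0) (c K), f z ∂μ
      = ∑ j ∈ Finset.range K, ∫ z in Ioc (c j) (c (j+1)), f z ∂μ := by
  induction K with
  | zero => simp
  | succ K ih =>
    have hsub1 : Ioc (c 0) (c K) ⊆ Ioc (c 0) (c (K+1)) :=
      Ioc_subset_Ioc le_rfl (hc (Nat.le_succ K))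
    have hsub2 : Ioc (c K) (c (K+1)) ⊆ Ioc (c 0) (c (K+1)) :=
      Ioc_subset_Ioc (hc (Nat.zero_le K)) le_rfl
    have hu : Ioc (c 0) (c K) ∪ Ioc (c K) (c (K+1)) = Ioc (c 0) (c (K+1)) :=
      Ioc_union_Ioc_eq_Ioc (hc (Nat.zero_le K)) (hc (Nat.le_succ K))
    have hdisj : Disjoint (Ioc (c 0) (c K)) (Ioc (c K) (c (K+1))) := by
      refine Set.disjoint_left.2 ?_
      rintro x ⟨_, h2⟩ ⟨h3, _⟩
      exact absurd h3 (not_lt.2 h2)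
    rw [Finset.sum_range_succ, ← ih (hint.mono_set hsub1), ← hu,
      setIntegral_union hdisj measurableSet_Ioc (hint.mono_set hsub1) (hint.mono_set hsub2)]

set_option maxHeartbeats 1000000 in
private lemma core_lemma (α a : ℝ) (hα : 0 < α) (ha : 0 ≤ a)
    (μ : ℕ → Measure ℝ) (hfin : ∀ n, IsFiniteMeasure (μ n))
    (hconv : ∀ x : ℝ, 0 < x →
      Tendsto (fun n => ((μ n) (Ioi x)).toReal) atTop (nhds (a / α * x ^ (-α))))
    (H : ℝ → ℝ) (hH : Continuous H) (C : ℝ) (hC : ∀ x, |H x| ≤ C)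
    (δ : ℝ) (hδ : 0 < δ) (hHδ : ∀ x ∈ Ioc (0:ℝ) δ, H x = 0) :
    Tendsto (fun n => ∫ z in Ioi (0:ℝ), H z ∂(μ n)) atTop
      (nhds (∫ z in Ioi (0:ℝ), H z * (a * z ^ (-α - 1)))) := by
  have hC0 : 0 ≤ C := (abs_nonneg _).trans (hC 0)
  set L : ℝ → ℝ := fun x => a / α * x ^ (-α) with hLdef
  set Λ : ℝ → ℝ := fun z => a * z ^ (-α - 1) with hΛdef
  have hLnon : ∀ x : ℝ, 0 < x → 0 ≤ L x := fun x hx =>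
    mul_nonneg (div_nonneg ha hα.le) (Real.rpow_nonneg hx.le _)
  have hΛnon : ∀ z : ℝ, 0 < z → 0 ≤ Λ z := fun z hz =>
    mul_nonneg ha (Real.rpow_nonneg hz.le _)
  have hexp : -α - 1 < -1 := by linarith
  have hΛint : ∀ x : ℝ, 0 < x → IntegrableOn Λ (Ioi x) := by
    intro x hx
    exact (integrableOn_Ioi_rpow_of_lt hexp hx).const_mul a
  have hΛtail : ∀ x : ℝ, 0 < x → ∫ z in Ioi x, Λ z = L x := by
    intro x hx
    rw [hΛdef]
    simp only []
    rw [MeasureTheory.integral_const_mul, integral_Ioi_rpow_of_lt hexp hx]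
    have h1 : -α - 1 + 1 = -α := by ring
    rw [h1, hLdef, neg_div_neg_eq]
    ring
  have hΛIoc : ∀ x y : ℝ, 0 < x → x ≤ y → ∫ z in Ioc x y, Λ z = L x - L y := by
    intro x y hx hxy
    have h0 : (0:ℝ) ∉ Set.uIcc x y := by
      rw [Set.mem_uIcc]
      push_neg
      refine ⟨fun h => absurd h (by linarith), fun h => absurd h (by linarith)⟩
    rw [← intervalIntegral.integral_of_le hxy, hΛdef]
    simp only []
    rw [intervalIntegral.integral_const_mul, integral_rpow (Or.inr ⟨by intro h; exact hα.ne' (by linarith), h0⟩)]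
    have h1 : -α - 1 + 1 = -α := by ring
    rw [h1, hLdef, div_neg]
    ring
  have hHmeas : ∀ (ξ : Measure ℝ) (s : Set ℝ), AEStronglyMeasurable H (ξ.restrict s) :=
    fun ξ s => hH.aestronglyMeasurable
  have hHint : ∀ n, Integrable H (μ n) := by
    intro n
    haveI := hfin n
    exact ⟨hH.aestronglyMeasurable,
      HasFiniteIntegral.of_bounded (C := C)
        (Eventually.of_forall fun x => by rw [Real.norm_eq_abs]; exact hC x)⟩
  have hΛmeas : Measurable Λ := by rw [hΛdef]; measurability
  have hHΛmeas : ∀ s : Set ℝ,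
      AEStronglyMeasurable (fun z => H z * Λ z) (volume.restrict s) := fun s =>
    (hH.measurable.mul hΛmeas).aestronglyMeasurable.restrict
  -- integrability of H * Λ on tails
  have hHΛint : ∀ x : ℝ, 0 < x → IntegrableOn (fun z => H z * Λ z) (Ioi x) := by
    intro x hx
    refine Integrable.mono ((hΛint x hx).const_mul C) (hHΛmeas _) ?_
    filter_upwards [ae_restrict_mem measurableSet_Ioi] with z hz
    have hΛz : 0 ≤ Λ z := hΛnon z (hx.trans hz)
    rw [Real.norm_eq_abs, Real.norm_eq_abs, abs_mul, abs_of_nonneg hΛz,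
      abs_of_nonneg (mul_nonneg hC0 hΛz)]
    exact mul_le_mul_of_nonneg_right (hC z) hΛz
  -- disjointness helpers
  have hdIocIoi : ∀ x y : ℝ, Disjoint (Ioc x y) (Ioi y) := by
    intro x y
    refine Set.disjoint_left.2 ?_
    rintro z ⟨_, h2⟩ h3
    exact absurd h3 (not_lt.2 h2)
  have hdIocIoc : ∀ x y w : ℝ, Disjoint (Ioc x y) (Ioc y w) := by
    intro x y w
    refine Set.disjoint_left.2 ?_
    rintro z ⟨_, h2⟩ ⟨h3, _⟩
    exact absurd h3 (not_lt.2 h2)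
  -- measure of Ioc via tails
  have hμIoc : ∀ n, ∀ x y : ℝ, x ≤ y →
      ((μ n) (Ioc x y)).toReal = ((μ n) (Ioi x)).toReal - ((μ n) (Ioi y)).toReal := by
    intro n x y hxy
    haveI := hfin n
    have hu : Ioc x y ∪ Ioi y = Ioi x := Ioc_union_Ioi_eq_Ioi hxy
    have hm := measure_union (hdIocIoi x y) measurableSet_Ioi (μ := μ n)
    rw [hu] at hm
    rw [hm, ENNReal.toReal_add (measure_ne_top _ _) (measure_ne_top _ _)]
    ring
  -- the main ε-argument
  rw [Metric.tendsto_nhds]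
  intro ε hε
  have hLδ : 0 ≤ L δ := hLnon δ hδ
  set D : ℝ := 2 * L δ + 3 * C + 2 with hD
  have hD0 : 0 < D := by rw [hD]; linarith
  set ε' : ℝ := ε / (2 * D) with hε'def
  have hε'0 : 0 < ε' := div_pos hε (by linarith)
  -- choose M
  have hLtend : Tendsto L atTop (nhds 0) := by
    have h := (tendsto_rpow_neg_atTop hα).const_mul (a / α)
    rw [mul_zero] at h
    exact h
  obtain ⟨M, hM2, hM1⟩ : ∃ M : ℝ, L M ≤ ε' ∧ δ + 1 ≤ M := by
    have h1 := Metric.tendsto_nhds.1 hLtend ε' hε'0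
    obtain ⟨M, hMa, hMb⟩ := (h1.and (eventually_ge_atTop (δ + 1))).exists
    refine ⟨M, ?_, hMb⟩
    rw [Real.dist_eq, sub_zero] at hMa
    exact (le_abs_self _).trans hMa.le
  have hδM : δ ≤ M := by linarith
  have hM0 : (0:ℝ) < M := lt_of_lt_of_le hδ hδM
  -- uniform continuity on [δ, M]
  obtain ⟨η, hη0, hηuc⟩ : ∃ η > 0, ∀ x ∈ Icc δ M, ∀ y ∈ Icc δ M,
      dist x y < η → dist (H x) (H y) < ε' := by
    have huc := isCompact_Icc.uniformContinuousOn_of_continuous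
      (s := Icc δ M) hH.continuousOn
    exact Metric.uniformContinuousOn_iff.1 huc ε' hε'0
  -- the partition
  set K : ℕ := ⌈(M - δ) / η⌉₊ with hKdef
  have hK0 : 0 < K := Nat.ceil_pos.2 (div_pos (by linarith) hη0)
  have hKR : (0:ℝ) < (K:ℝ) := Nat.cast_pos.2 hK0
  set mesh : ℝ := (M - δ) / K with hmeshdef
  have hmesh0 : 0 < mesh := div_pos (by linarith) hKR
  have hmeshη : mesh ≤ η := by
    rw [hmeshdef, div_le_iff₀ hKR]
    have h1 : (M - δ) / η ≤ (K:ℝ) := Nat.le_ceil _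
    calc M - δ = (M - δ) / η * η := by field_simp
      _ ≤ (K:ℝ) * η := mul_le_mul_of_nonneg_right h1 hη0.le
      _ = η * K := mul_comm _ _
  set c : ℕ → ℝ := fun j => δ + j * mesh with hcdef
  have hc0 : c 0 = δ := by simp [hcdef]
  have hcK : c K = M := by
    rw [hcdef]
    simp only []
    rw [hmeshdef]
    field_simp
    ring
  have hcmono : Monotone c := by
    intro i j hij
    simp only [hcdef]
    have h1 : (i:ℝ) ≤ (j:ℝ) := Nat.cast_le.2 hij
    nlinarith
  have hcpos : ∀ j, δ ≤ c j := by
    intro j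
    simp only [hcdef]
    have : (0:ℝ) ≤ (j:ℝ) * mesh := mul_nonneg (Nat.cast_nonneg _) hmesh0.le
    linarith
  have hcleM : ∀ j, j ≤ K → c j ≤ M := fun j hj => hcK ▸ hcmono hj
  have hstep : ∀ j : ℕ, c (j+1) - c j = mesh := by
    intro j
    simp only [hcdef]
    push_cast
    ring
  have hcpos0 : ∀ j, (0:ℝ) < c j := fun j => hδ.trans_le (hcpos j)
  -- oscillation bound on pieces
  have hosc : ∀ j, j < K → ∀ z ∈ Ioc (c j) (c (j+1)), |H z - H (c (j+1))| ≤ ε' := by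
    intro j hj z hz
    have hj1 : j + 1 ≤ K := hj
    have hzl : δ ≤ z := (hcpos j).trans hz.1.le
    have hzu : z ≤ M := hz.2.trans (hcleM (j+1) hj1)
    have hcj1 : c (j+1) ∈ Icc δ M := ⟨hcpos _, hcleM _ hj1⟩
    have hdist : dist z (c (j+1)) < η := by
      rw [Real.dist_eq, abs_of_nonpos (by linarith [hz.2])]
      have h1 := hz.1
      have h2 := hstep j
      linarith
    have := hηuc z ⟨hzl, hzu⟩ (c (j+1)) hcj1 hdist
    rw [Real.dist_eq] at this
    exact this.le
  -- S and its convergence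
  set S : ℝ := ∑ j ∈ Finset.range K, H (c (j+1)) * (L (c j) - L (c (j+1))) with hSdef
  have hSn_tendsto : Tendsto (fun n => ∑ j ∈ Finset.range K,
      H (c (j+1)) * ((μ n) (Ioc (c j) (c (j+1)))).toReal) atTop (nhds S) := by
    rw [hSdef]
    apply tendsto_finset_sum
    intro j _
    have h1 : Tendsto (fun n => ((μ n) (Ioi (c j))).toReal - ((μ n) (Ioi (c (j+1)))).toReal)
        atTop (nhds (L (c j) - L (c (j+1)))) :=
      (hconv (c j) (hcpos0 j)).sub (hconv (c (j+1)) (hcpos0 (j+1)))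
    refine (h1.const_mul (H (c (j+1)))).congr fun n => ?_
    rw [hμIoc n _ _ (hcmono (Nat.le_succ j))]
  -- eventual bounds
  have hE1 : ∀ᶠ n in atTop, ((μ n) (Ioi δ)).toReal ≤ L δ + 1 := by
    filter_upwards [Metric.tendsto_nhds.1 (hconv δ hδ) 1 one_pos] with n hn
    rw [Real.dist_eq] at hn
    have heq : L δ = a / α * δ ^ (-α) := rfl
    linarith [(abs_lt.1 hn).2]
  have hE2 : ∀ᶠ n in atTop, |(∑ j ∈ Finset.range K,
      H (c (j+1)) * ((μ n) (Ioc (c j) (c (j+1)))).toReal) - S| ≤ ε' := by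
    filter_upwards [Metric.tendsto_nhds.1 hSn_tendsto ε' hε'0] with n hn
    rw [Real.dist_eq] at hn
    exact hn.le
  have hE3 : ∀ᶠ n in atTop, ((μ n) (Ioi M)).toReal ≤ 2 * ε' := by
    filter_upwards [Metric.tendsto_nhds.1 (hconv M hM0) ε' hε'0] with n hn
    rw [Real.dist_eq] at hn
    have heq : L M = a / α * M ^ (-α) := rfl
    linarith [(abs_lt.1 hn).2]
  -- limit-side quantities
  set B : ℝ := ∫ z in Ioc δ M, H z * Λ z with hBdef
  set T : ℝ := ∫ z in Ioi M, H z * Λ z with hTdef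
  have hΛIocInt : ∀ j, j < K → IntegrableOn Λ (Ioc (c j) (c (j+1))) :=
    fun j _ => (hΛint (c j) (hcpos0 j)).mono_set Ioc_subset_Ioi_self
  have hHΛIocInt : ∀ j, j < K → IntegrableOn (fun z => H z * Λ z) (Ioc (c j) (c (j+1))) :=
    fun j _ => (hHΛint (c j) (hcpos0 j)).mono_set Ioc_subset_Ioi_self
  have hLsum : ∑ j ∈ Finset.range K, (L (c j) - L (c (j+1))) = L δ - L M := by
    rw [Finset.sum_range_sub' (fun j => L (c j)) K, hc0, hcK]
  -- B as a sum over pieces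
  have hB_eq : B = ∑ j ∈ Finset.range K, ∫ z in Ioc (c j) (c (j+1)), H z * Λ z := by
    rw [hBdef]
    have h := partition_integral volume (fun z => H z * Λ z) c hcmono K
      (by rw [hc0, hcK]; exact (hHΛint δ hδ).mono_set Ioc_subset_Ioi_self)
    rw [hc0, hcK] at h
    exact h
  -- per-piece comparison on the limit side
  have hpieceB : ∀ j, j < K →
      |H (c (j+1)) * (L (c j) - L (c (j+1))) - ∫ z in Ioc (c j) (c (j+1)), H z * Λ z|
        ≤ ε' * (L (c j) - L (c (j+1))) := by
    intro j hj
    have hle : c j ≤ c (j+1) := hcmono (Nat.le_succ j)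
    have h1 : H (c (j+1)) * (L (c j) - L (c (j+1)))
        = ∫ z in Ioc (c j) (c (j+1)), H (c (j+1)) * Λ z := by
      rw [MeasureTheory.integral_const_mul, hΛIoc _ _ (hcpos0 j) hle]
    rw [h1, ← integral_sub ((hΛIocInt j hj).const_mul _) (hHΛIocInt j hj)]
    have h2 : |∫ z in Ioc (c j) (c (j+1)), (H (c (j+1)) * Λ z - H z * Λ z)|
        ≤ ∫ z in Ioc (c j) (c (j+1)), ε' * Λ z := by
      rw [← Real.norm_eq_abs]
      refine (norm_integral_le_integral_norm _).trans ?_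
      refine setIntegral_mono_on
        (((hΛIocInt j hj).const_mul _).sub (hHΛIocInt j hj)).norm
        ((hΛIocInt j hj).const_mul ε') measurableSet_Ioc ?_
      intro z hz
      have hΛz : 0 ≤ Λ z := hΛnon z ((hcpos0 j).trans hz.1)
      rw [Real.norm_eq_abs]
      have h3 : H (c (j+1)) * Λ z - H z * Λ z = (H (c (j+1)) - H z) * Λ z := by ring
      rw [h3, abs_mul, abs_of_nonneg hΛz]
      refine mul_le_mul_of_nonneg_right ?_ hΛz
      rw [abs_sub_comm]
      exact hosc j hj z hz
    refine h2.trans ?_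
    rw [MeasureTheory.integral_const_mul, hΛIoc _ _ (hcpos0 j) hle]
  have hSB : |S - B| ≤ ε' * L δ := by
    rw [hSdef, hB_eq, ← Finset.sum_sub_distrib]
    refine (Finset.abs_sum_le_sum_abs _ _).trans ?_
    have h1 : ∑ j ∈ Finset.range K,
        |H (c (j+1)) * (L (c j) - L (c (j+1))) - ∫ z in Ioc (c j) (c (j+1)), H z * Λ z|
        ≤ ∑ j ∈ Finset.range K, ε' * (L (c j) - L (c (j+1))) :=
      Finset.sum_le_sum fun j hj => hpieceB j (Finset.mem_range.1 hj)
    refine h1.trans ?_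
    rw [← Finset.mul_sum, hLsum]
    have h2 : L δ - L M ≤ L δ := by linarith [hLnon M hM0]
    exact mul_le_mul_of_nonneg_left h2 hε'0.le
  -- tail bound on the limit side
  have hT : |T| ≤ C * ε' := by
    rw [hTdef, ← Real.norm_eq_abs]
    have h1 : ‖∫ z in Ioi M, H z * Λ z‖ ≤ ∫ z in Ioi M, C * Λ z := by
      refine (norm_integral_le_integral_norm _).trans ?_
      refine setIntegral_mono_on (hHΛint M hM0).norm ((hΛint M hM0).const_mul C)
        measurableSet_Ioi ?_
      intro z hz
      have hΛz : 0 ≤ Λ z := hΛnon z (hM0.trans hz)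
      rw [Real.norm_eq_abs, abs_mul, abs_of_nonneg hΛz]
      exact mul_le_mul_of_nonneg_right (hC z) hΛz
    refine h1.trans ?_
    rw [MeasureTheory.integral_const_mul, hΛtail M hM0]
    exact mul_le_mul_of_nonneg_left hM2 hC0
  -- decomposition of the limit integral
  have hIdec : ∫ z in Ioi (0:ℝ), H z * Λ z = B + T := by
    have hzero : ∀ z ∈ Ioc (0:ℝ) δ, H z * Λ z = 0 := fun z hz => by
      rw [hHδ z hz, zero_mul]
    have hint0δ : IntegrableOn (fun z => H z * Λ z) (Ioc 0 δ) := by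
      refine (integrableOn_const measure_Ioc_lt_top.ne :
        IntegrableOn (fun _ => (0:ℝ)) (Ioc (0:ℝ) δ) volume).congr_fun
        (fun z hz => (hzero z hz).symm) measurableSet_Ioc
    have hintδM : IntegrableOn (fun z => H z * Λ z) (Ioc δ M) :=
      (hHΛint δ hδ).mono_set Ioc_subset_Ioi_self
    have hint0M : IntegrableOn (fun z => H z * Λ z) (Ioc 0 M) := by
      rw [← Ioc_union_Ioc_eq_Ioc hδ.le hδM]
      exact hint0δ.union hintδM
    rw [← Ioc_union_Ioi_eq_Ioi hM0.le,
      setIntegral_union (hdIocIoi 0 M) measurableSet_Ioi hint0M (hHΛint M hM0), hTdef]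
    congr 1
    rw [← Ioc_union_Ioc_eq_Ioc hδ.le hδM,
      setIntegral_union (hdIocIoc 0 δ M) measurableSet_Ioc hint0δ hintδM,
      setIntegral_eq_zero_of_forall_eq_zero hzero, zero_add, hBdef]
  -- now the per-n estimates
  filter_upwards [hE1, hE2, hE3] with n h1 h2 h3
  haveI := hfin n
  set An : ℝ := ∫ z in Ioc δ M, H z ∂(μ n) with hAndef
  set Tn : ℝ := ∫ z in Ioi M, H z ∂(μ n) with hTndef
  set Sn : ℝ := ∑ j ∈ Finset.range K, H (c (j+1)) * ((μ n) (Ioc (c j) (c (j+1)))).toReal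
    with hSndef
  -- decomposition of ∫_{Ioi 0} H dμ n
  have hdecn : ∫ z in Ioi (0:ℝ), H z ∂(μ n) = An + Tn := by
    rw [← Ioc_union_Ioi_eq_Ioi hM0.le,
      setIntegral_union (hdIocIoi 0 M) measurableSet_Ioi
        (hHint n).integrableOn (hHint n).integrableOn, hTndef]
    congr 1
    rw [← Ioc_union_Ioc_eq_Ioc hδ.le hδM,
      setIntegral_union (hdIocIoc 0 δ M) measurableSet_Ioc
        (hHint n).integrableOn (hHint n).integrableOn,
      setIntegral_eq_zero_of_forall_eq_zero hHδ, zero_add, hAndef]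
  -- An as a sum over pieces
  have hAn_eq : An = ∑ j ∈ Finset.range K, ∫ z in Ioc (c j) (c (j+1)), H z ∂(μ n) := by
    rw [hAndef]
    have h := partition_integral (μ n) H c hcmono K
      (by rw [hc0, hcK]; exact (hHint n).integrableOn)
    rw [hc0, hcK] at h
    exact h
  have hmeas_sum : ((μ n) (Ioc δ M)).toReal
      = ∑ j ∈ Finset.range K, ((μ n) (Ioc (c j) (c (j+1)))).toReal := by
    have h := partition_integral (μ n) (fun _ => (1:ℝ)) c hcmono K
      (integrableOn_const (measure_lt_top _ _).ne)
    simp only [MeasureTheory.setIntegral_const, smul_eq_mul, mul_one] at h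
    rw [hc0, hcK] at h
    exact h
  have hAnSn : |An - Sn| ≤ ε' * ((μ n) (Ioc δ M)).toReal := by
    rw [hAn_eq, hSndef, ← Finset.sum_sub_distrib]
    refine (Finset.abs_sum_le_sum_abs _ _).trans ?_
    rw [hmeas_sum, Finset.mul_sum]
    refine Finset.sum_le_sum fun j hj => ?_
    have hjK := Finset.mem_range.1 hj
    have hconst : H (c (j+1)) * ((μ n) (Ioc (c j) (c (j+1)))).toReal
        = ∫ _ in Ioc (c j) (c (j+1)), H (c (j+1)) ∂(μ n) := by
      rw [setIntegral_const, smul_eq_mul, mul_comm]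
      rfl
    rw [hconst, ← integral_sub (hHint n).integrableOn (integrable_const _).integrableOn,
      ← Real.norm_eq_abs]
    refine norm_setIntegral_le_of_norm_le_const (measure_lt_top _ _) ?_
    intro z hz
    rw [Real.norm_eq_abs]
    exact hosc j hjK z hz
  have hIocδM : ((μ n) (Ioc δ M)).toReal ≤ L δ + 1 := by
    refine le_trans ?_ h1
    exact ENNReal.toReal_mono (measure_ne_top _ _) (measure_mono Ioc_subset_Ioi_self)
  have hb1 : |An - Sn| ≤ ε' * (L δ + 1) :=
    hAnSn.trans (mul_le_mul_of_nonneg_left hIocδM hε'0.le)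
  have hb4 : |Tn| ≤ C * (2 * ε') := by
    rw [hTndef, ← Real.norm_eq_abs]
    refine le_trans (norm_setIntegral_le_of_norm_le_const (measure_lt_top _ _)
      (fun z _ => by rw [Real.norm_eq_abs]; exact hC z)) ?_
    exact mul_le_mul_of_nonneg_left h3 hC0
  -- combine
  rw [Real.dist_eq, hdecn, hIdec]
  have htri : |An + Tn - (B + T)| ≤ |An - Sn| + |Sn - S| + |S - B| + (|Tn| + |T|) := by
    have h4 : An + Tn - (B + T) = (An - Sn) + ((Sn - S) + ((S - B) + (Tn + -T))) := by ring
    rw [h4]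
    refine (abs_add_le _ _).trans ?_
    have h5 := abs_add_le (Sn - S) ((S - B) + (Tn + -T))
    have h6 := abs_add_le (S - B) (Tn + -T)
    have h7 := abs_add_le Tn (-T)
    rw [abs_neg] at h7
    linarith
  have hfinal : ε' * (L δ + 1) + ε' + ε' * L δ + (C * (2 * ε') + C * ε') = ε' * D := by
    rw [hD]; ring
  have hhalf : ε' * D = ε / 2 := by
    rw [hε'def]
    field_simp
  calc |An + Tn - (B + T)|
      ≤ |An - Sn| + |Sn - S| + |S - B| + (|Tn| + |T|) := htri
    _ ≤ ε' * (L δ + 1) + ε' + ε' * L δ + (C * (2 * ε') + C * ε') := by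
        have := h2
        gcongr <;> assumption
    _ = ε / 2 := by rw [hfinal, hhalf]
    _ < ε := by linarith

/-- Let `α ∈ (0,2)`, `a₊, a₋ ≥ 0`, and let `ν` be a probability measure on `ℝ`
satisfying the stable tail condition of index `α`: for every `x > 0`,
`n ν((n^{1/α} x, ∞)) → (a₊/α) x^{-α}` and `n ν((-∞, -n^{1/α} x)) → (a₋/α) x^{-α}`.
Then for every bounded continuous `G : ℝ → ℝ` vanishing on a neighborhood of `0`,
`n ∫ G(u n^{-1/α}) ν(du) → ∫_{(0,∞)} G(z) a₊ z^{-α-1} dz + ∫_{(-∞,0)} G(z) a₋ |z|^{-α-1} dz`. -/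
theorem stmt3 (α : ℝ) (hα : α ∈ Set.Ioo (0:ℝ) 2) (apos aneg : ℝ)
    (hapos : 0 ≤ apos) (haneg : 0 ≤ aneg)
    (ν : Measure ℝ) [IsProbabilityMeasure ν]
    (htail_pos : ∀ x : ℝ, 0 < x →
      Tendsto (fun n : ℕ => (n : ℝ) * (ν (Ioi ((n : ℝ) ^ (1 / α) * x))).toReal)
        atTop (nhds (apos / α * x ^ (-α))))
    (htail_neg : ∀ x : ℝ, 0 < x →
      Tendsto (fun n : ℕ => (n : ℝ) * (ν (Iio (-((n : ℝ) ^ (1 / α) * x)))).toReal)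
        atTop (nhds (aneg / α * x ^ (-α))))
    (G : ℝ → ℝ) (hGcont : Continuous G) (hGbdd : ∃ C : ℝ, ∀ x, |G x| ≤ C)
    (hG0 : ∀ᶠ x in nhds (0:ℝ), G x = 0) :
    Tendsto (fun n : ℕ => (n : ℝ) * ∫ u, G (u * (n : ℝ) ^ (-(1 / α))) ∂ν) atTop
      (nhds ((∫ z in Ioi (0:ℝ), G z * (apos * z ^ (-α - 1))) +
        ∫ z in Iio (0:ℝ), G z * (aneg * |z| ^ (-α - 1)))) := by
  obtain ⟨hα0, hα2⟩ := hα
  obtain ⟨C, hC⟩ := hGbdd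
  -- a radius on which G vanishes
  obtain ⟨δ, hδ0, hGδ⟩ : ∃ δ : ℝ, 0 < δ ∧ ∀ x : ℝ, |x| ≤ δ → G x = 0 := by
    rcases Metric.eventually_nhds_iff.1 hG0 with ⟨r, hr0, hr⟩
    refine ⟨r / 2, half_pos hr0, fun x hx => hr ?_⟩
    rw [Real.dist_eq, sub_zero]
    exact lt_of_le_of_lt hx (half_lt_self hr0)
  have hG00 : G 0 = 0 := hGδ 0 (by simpa using hδ0.le)
  -- the rescaled measures
  set κ : ℕ → Measure ℝ :=
    fun n => (n : ℝ≥0∞) • Measure.map (fun u => u * (n:ℝ) ^ (-(1/α))) ν with hκdef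
  have hmeasT : ∀ n : ℕ, Measurable (fun u : ℝ => u * (n:ℝ) ^ (-(1/α))) :=
    fun n => measurable_id.mul_const _
  have hκfin : ∀ n, IsFiniteMeasure (κ n) := by
    intro n
    constructor
    rw [hκdef]
    simp only [Measure.smul_apply, smul_eq_mul,
      Measure.map_apply (hmeasT n) MeasurableSet.univ, Set.preimage_univ, measure_univ,
      mul_one]
    exact ENNReal.natCast_lt_top n
  -- preimage identities
  have hrpow_pos : ∀ n : ℕ, 1 ≤ n → (0:ℝ) < (n:ℝ) ^ (-(1/α)) := by
    intro n hn
    have : (0:ℝ) < (n:ℝ) := by exact_mod_cast hn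
    exact Real.rpow_pos_of_pos this _
  have hpre_pos : ∀ n : ℕ, 1 ≤ n → ∀ x : ℝ, 0 < x →
      (fun u : ℝ => u * (n:ℝ) ^ (-(1/α))) ⁻¹' (Ioi x) = Ioi ((n:ℝ) ^ (1/α) * x) := by
    intro n hn x _
    have hn0 : (0:ℝ) < (n:ℝ) := by exact_mod_cast hn
    have hp : (0:ℝ) < (n:ℝ) ^ (1/α) := Real.rpow_pos_of_pos hn0 _
    ext u
    simp only [mem_preimage, mem_Ioi]
    rw [Real.rpow_neg hn0.le, ← div_eq_mul_inv, lt_div_iff₀ hp, mul_comm]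
  have hpre_neg : ∀ n : ℕ, 1 ≤ n → ∀ x : ℝ, 0 < x →
      (fun u : ℝ => u * (n:ℝ) ^ (-(1/α))) ⁻¹' (Iio (-x)) = Iio (-((n:ℝ) ^ (1/α) * x)) := by
    intro n hn x _
    have hn0 : (0:ℝ) < (n:ℝ) := by exact_mod_cast hn
    have hp : (0:ℝ) < (n:ℝ) ^ (1/α) := Real.rpow_pos_of_pos hn0 _
    ext u
    simp only [mem_preimage, mem_Iio]
    rw [Real.rpow_neg hn0.le, ← div_eq_mul_inv, div_lt_iff₀ hp, neg_mul, mul_comm]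
  -- tails of κ
  have htail1 : ∀ x : ℝ, 0 < x →
      Tendsto (fun n => ((κ n) (Ioi x)).toReal) atTop (nhds (apos / α * x ^ (-α))) := by
    intro x hx
    refine (htail_pos x hx).congr' ?_
    filter_upwards [eventually_ge_atTop 1] with n hn
    rw [hκdef]
    simp only [Measure.smul_apply, smul_eq_mul,
      Measure.map_apply (hmeasT n) measurableSet_Ioi, hpre_pos n hn x hx]
    rw [ENNReal.toReal_mul, ENNReal.toReal_natCast]
  -- the reflected measures
  set κ' : ℕ → Measure ℝ := fun n => Measure.map Neg.neg (κ n) with hκ'def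
  have hκ'fin : ∀ n, IsFiniteMeasure (κ' n) := by
    intro n
    haveI := hκfin n
    constructor
    rw [hκ'def]
    simp only []
    rw [Measure.map_apply measurable_neg MeasurableSet.univ, Set.preimage_univ]
    exact measure_lt_top _ _
  have hnegpre : ∀ x : ℝ, (Neg.neg : ℝ → ℝ) ⁻¹' (Ioi x) = Iio (-x) := by
    intro x
    ext z
    simp only [mem_preimage, mem_Ioi, mem_Iio]
    constructor <;> intro h <;> linarith
  have htail2 : ∀ x : ℝ, 0 < x →
      Tendsto (fun n => ((κ' n) (Ioi x)).toReal) atTop (nhds (aneg / α * x ^ (-α))) := by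
    intro x hx
    refine (htail_neg x hx).congr' ?_
    filter_upwards [eventually_ge_atTop 1] with n hn
    rw [hκ'def]
    simp only []
    rw [Measure.map_apply measurable_neg measurableSet_Ioi, hnegpre x, hκdef]
    simp only [Measure.smul_apply, smul_eq_mul,
      Measure.map_apply (hmeasT n) measurableSet_Iio, hpre_neg n hn x hx]
    rw [ENNReal.toReal_mul, ENNReal.toReal_natCast]
  -- apply the core lemma twice
  have hHδ1 : ∀ x ∈ Ioc (0:ℝ) δ, G x = 0 := fun x hx =>
    hGδ x (by rw [abs_of_pos hx.1]; exact hx.2)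
  have hcore1 := core_lemma α apos hα0 hapos κ hκfin htail1 G hGcont C hC δ hδ0 hHδ1
  have hGneg_cont : Continuous (fun z : ℝ => G (-z)) := hGcont.comp continuous_neg
  have hcore2 := core_lemma α aneg hα0 haneg κ' hκ'fin htail2 (fun z => G (-z))
    hGneg_cont C (fun x => hC _) δ hδ0
    (fun x hx => hGδ (-x) (by rw [abs_neg, abs_of_pos hx.1]; exact hx.2))
  -- translate the negative-side integrals
  have hneg_int : ∀ n, ∫ z in Ioi (0:ℝ), G (-z) ∂(κ' n) = ∫ z in Iio (0:ℝ), G z ∂(κ n) := by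
    intro n
    rw [hκ'def]
    simp only []
    rw [setIntegral_map measurableSet_Ioi hGneg_cont.aestronglyMeasurable
      measurable_neg.aemeasurable, hnegpre 0, neg_zero]
    simp only [neg_neg]
  have hlim_neg : ∫ z in Ioi (0:ℝ), G (-z) * (aneg * z ^ (-α - 1))
      = ∫ z in Iio (0:ℝ), G z * (aneg * |z| ^ (-α - 1)) := by
    have h := integral_comp_neg_Ioi (0:ℝ) (fun z => G z * (aneg * |z| ^ (-α - 1)))
    rw [neg_zero] at h
    rw [← integral_Iic_eq_integral_Iio, ← h]
    refine setIntegral_congr_fun measurableSet_Ioi fun z hz => ?_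
    rw [abs_neg, abs_of_pos hz]
  have hcore2' : Tendsto (fun n => ∫ z in Iio (0:ℝ), G z ∂(κ n)) atTop
      (nhds (∫ z in Iio (0:ℝ), G z * (aneg * |z| ^ (-α - 1)))) := by
    rw [← hlim_neg]
    exact hcore2.congr hneg_int
  have hsum := hcore1.add hcore2'
  -- identify the prelimit quantities for n ≥ 1
  refine hsum.congr' ?_
  filter_upwards [eventually_ge_atTop 1] with n hn
  haveI := hκfin n
  have hGint : Integrable G (κ n) :=
    ⟨hGcont.aestronglyMeasurable,
      HasFiniteIntegral.of_bounded (C := C)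
        (Eventually.of_forall fun x => by rw [Real.norm_eq_abs]; exact hC x)⟩
  have h1 : ∫ z, G z ∂(κ n) = (n : ℝ) * ∫ u, G (u * (n:ℝ) ^ (-(1/α))) ∂ν := by
    rw [hκdef]
    simp only []
    rw [integral_smul_measure,
      integral_map (hmeasT n).aemeasurable hGcont.aestronglyMeasurable]
    rw [ENNReal.toReal_natCast, smul_eq_mul]
  have hsingle : ∫ z in ({0} : Set ℝ), G z ∂(κ n) = 0 :=
    setIntegral_eq_zero_of_forall_eq_zero fun x hx => by
      rw [mem_singleton_iff] at hx; rw [hx]; exact hG00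
  have hIci : Ici (0:ℝ) = ({0} : Set ℝ) ∪ Ioi 0 := by
    ext z
    simp only [mem_Ici, mem_union, mem_singleton_iff, mem_Ioi]
    constructor
    · intro h
      rcases eq_or_lt_of_le h with h' | h'
      · exact Or.inl h'.symm
      · exact Or.inr h'
    · rintro (rfl | h)
      · exact le_rfl
      · exact h.le
  have hd1 : Disjoint (Iio (0:ℝ)) (Ici 0) := Iio_disjoint_Ici le_rfl
  have hd2 : Disjoint ({0} : Set ℝ) (Ioi 0) := by
    refine Set.disjoint_left.2 ?_
    rintro z hz h2
    rw [mem_singleton_iff] at hz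
    rw [hz] at h2
    exact lt_irrefl 0 (mem_Ioi.1 h2)
  have h2 : ∫ z, G z ∂(κ n)
      = (∫ z in Ioi (0:ℝ), G z ∂(κ n)) + ∫ z in Iio (0:ℝ), G z ∂(κ n) := by
    rw [← setIntegral_univ, ← Set.Iio_union_Ici (a := (0:ℝ)),
      setIntegral_union hd1 measurableSet_Ici hGint.integrableOn hGint.integrableOn,
      hIci, setIntegral_union hd2 measurableSet_Ioi hGint.integrableOn hGint.integrableOn,
      hsingle, zero_add, add_comm]
  rw [← h1, h2]
end

section
/- Let S be a separable metrizable space. For each N ≥ 1, let X^{N,1}, …, X^{N,N} be an exchangeable family of S-valued random variables on a probability space (Ω_N, P_N), and let μ^N := (1/N) ∑_{i=1}^N δ_{X^{N,i}} be the associated empirical measure, viewed as a random element of the space of Borel probability measures on S equipped with the topology of weak convergence. Let μ be a random Borel probability measure on S defined on a probability space (Ω, P), and assume that μ^N converges to μ in distribution, i.e. for every bounded continuous F on the space of probability measures on S, E[F(μ^N)] → E[F(μ)] as N → ∞. Then for every m ≥ 1, every bounded continuous g on the space of probability measures on S, and all bounded continuous g_1, …, g_m : S → ℝ, lim_{N→∞}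 E[ g(μ^N) ∏_{i=1}^m g_i(X^{N,i}) ] = E[ g(μ) ∏_{i=1}^m ∫_S g_i dμ ]. -/
open MeasureTheory Filter Topology Set
open scoped ENNReal

section aux

lemma exists_perm_comp {α β : Type*} [Fintype α] [Fintype β] [DecidableEq β]
    (a b : α → β) (ha : Function.Injective a) (hb : Function.Injective b) :
    ∃ σ : Equiv.Perm β, ∀ x, σ (a x) = b x := by
  classical
  have h1 : Fintype.card (Set.range a) = Fintype.card α := Set.card_range_of_injective ha
  have h2 : Fintype.card (Set.range b) = Fintype.card α := Set.card_range_of_injective hb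
  have hc : Fintype.card ((Set.range a)ᶜ : Set β) = Fintype.card ((Set.range b)ᶜ : Set β) := by
    rw [Fintype.card_compl_set, Fintype.card_compl_set, h1, h2]
  obtain ⟨c⟩ := Fintype.card_eq.mp hc
  let ea : α ≃ Set.range a := Equiv.ofInjective a ha
  let eb : α ≃ Set.range b := Equiv.ofInjective b hb
  refine ⟨((Equiv.sumCompl (· ∈ Set.range a)).symm.trans
    ((Equiv.sumCongr (ea.symm.trans eb) c).trans (Equiv.sumCompl (· ∈ Set.range b)))), ?_⟩
  intro x
  simp only [Equiv.trans_apply]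
  rw [Equiv.sumCompl_symm_apply_of_pos (p := (· ∈ Set.range a)) (Set.mem_range_self x)]
  have h3 : ea.symm ⟨a x, Set.mem_range_self x⟩ = x := by
    have := Equiv.ofInjective_symm_apply ha x
    simpa [ea] using this
  show (Equiv.sumCompl _) (Sum.map (ea.symm.trans eb) c (Sum.inl ⟨a x, Set.mem_range_self x⟩)) = b x
  simp only [Sum.map_inl, Equiv.trans_apply, h3, Equiv.sumCompl_apply_inl]
  simp [eb, Equiv.ofInjective_apply]

variable {S : Type*} [MeasurableSpace S] [TopologicalSpace S] [BorelSpace S]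
    [TopologicalSpace.SeparableSpace S] [TopologicalSpace.PseudoMetrizableSpace S]

lemma sc : SecondCountableTopology S := by
  letI := TopologicalSpace.pseudoMetrizableSpacePseudoMetric S
  exact UniformSpace.secondCountable_of_separable S

noncomputable def emp (N : ℕ) (hN : 0 < N) (x : Fin N → S) : ProbabilityMeasure S :=
  ⟨(N : ℝ≥0∞)⁻¹ • ∑ i : Fin N, Measure.dirac (x i), by
    constructor
    simp [Measure.smul_apply, smul_eq_mul, Finset.card_univ]
    rw [ENNReal.inv_mul_cancel (by exact_mod_cast hN.ne') (by simp)]⟩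

lemma integral_emp (N : ℕ) (hN : 0 < N) (x : Fin N → S) (f : S → ℝ) (hf : Continuous f) :
    ∫ s, f s ∂(emp N hN x : Measure S) = (N : ℝ)⁻¹ * ∑ i : Fin N, f (x i) := by
  have hint : ∀ (i : Fin N), Integrable f (Measure.dirac (x i)) := fun i =>
    ⟨hf.stronglyMeasurable.aestronglyMeasurable, by
      simp [HasFiniteIntegral, lintegral_dirac' _ (hf.measurable.enorm)]⟩
  show ∫ s, f s ∂((N : ℝ≥0∞)⁻¹ • ∑ i : Fin N, Measure.dirac (x i)) = _
  rw [integral_smul_measure, integral_finset_sum_measure (fun i _ => hint i)]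
  rw [show ((N:ℝ≥0∞)⁻¹).toReal = (N:ℝ)⁻¹ by simp [ENNReal.toReal_inv], smul_eq_mul]
  congr 1
  exact Finset.sum_congr rfl fun i _ => integral_dirac' f (x i) hf.stronglyMeasurable

lemma continuous_emp (N : ℕ) (hN : 0 < N) : Continuous (emp (S := S) N hN) := by
  rw [continuous_iff_continuousAt]
  intro x
  unfold ContinuousAt
  rw [ProbabilityMeasure.tendsto_iff_forall_integral_tendsto]
  intro f
  have key : ∀ y : Fin N → S, ∫ s, f s ∂(emp N hN y : Measure S)
      = (N : ℝ)⁻¹ * ∑ i : Fin N, f (y i) := fun y => integral_emp N hN y f f.continuous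
  simp_rw [key]
  exact (continuous_const.mul (continuous_finset_sum _ fun i _ =>
    f.continuous.comp (continuous_apply i))).continuousAt

lemma emp_comp_perm (N : ℕ) (hN : 0 < N) (x : Fin N → S) (σ : Equiv.Perm (Fin N)) :
    emp N hN (x ∘ σ) = emp N hN x := by
  apply MeasureTheory.ProbabilityMeasure.toMeasure_injective
  show (N : ℝ≥0∞)⁻¹ • ∑ i : Fin N, Measure.dirac (x (σ i)) = _
  rw [Equiv.sum_comp σ (fun i => Measure.dirac (x i))]
  rfl

end aux

/-- Let `S` be a separable metrizable space. For each `N`, let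
`X^{N,1}, …, X^{N,N}` be an exchangeable family of `S`-valued random variables on `(Ω_N, P_N)`
with empirical measure `μ^N = (1/N) ∑_{i<N} δ_{X^{N,i}}`, viewed as a random element of the
space of Borel probability measures on `S` with the topology of weak convergence. Let `μ` be a
random Borel probability measure on `(Ω', P')` and assume `E[F(μ^N)] → E[F(μ)]` for every
bounded continuous `F`. Then for every `m ≥ 1`, every bounded continuous `g` on probability
measures and all bounded continuous `g_1, …, g_m : S → ℝ`,
`E[g(μ^N) ∏_{i<m} g_i(X^{N,i})] → E[g(μ) ∏_{i<m} ∫ g_i dμ]`. -/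
theorem stmt8 {S : Type*} [MeasurableSpace S] [TopologicalSpace S] [BorelSpace S]
    [TopologicalSpace.SeparableSpace S] [TopologicalSpace.PseudoMetrizableSpace S]
    (ΩN : ℕ → Type*) [∀ N, MeasurableSpace (ΩN N)]
    (P : ∀ N, Measure (ΩN N)) [∀ N, IsProbabilityMeasure (P N)]
    (X : ∀ N : ℕ, ℕ → ΩN N → S)
    (hXmeas : ∀ N, ∀ i < N, Measurable (X N i))
    (hexch : ∀ N (σ : Equiv.Perm (Fin N)),
      Measure.map (fun ω (i : Fin N) => X N (σ i : ℕ) ω) (P N) =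
        Measure.map (fun ω (i : Fin N) => X N (i : ℕ) ω) (P N))
    (μN : ∀ N : ℕ, ΩN N → ProbabilityMeasure S)
    (hμN : ∀ N : ℕ, 0 < N → ∀ ω, (μN N ω : Measure S) =
      (N : ℝ≥0∞)⁻¹ • ∑ i ∈ Finset.range N, Measure.dirac (X N i ω))
    {Ω' : Type*} [MeasurableSpace Ω'] (P' : Measure Ω') [IsProbabilityMeasure P']
    (μ : Ω' → ProbabilityMeasure S)
    (hconv : ∀ F : ProbabilityMeasure S → ℝ, Continuous F → (∃ C : ℝ, ∀ π, |F π| ≤ C) →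
      Tendsto (fun N => ∫ ω, F (μN N ω) ∂(P N)) atTop (nhds (∫ ω', F (μ ω') ∂P')))
    (m : ℕ) (hm : 1 ≤ m)
    (g : ProbabilityMeasure S → ℝ) (hgcont : Continuous g) (hgbdd : ∃ C : ℝ, ∀ π, |g π| ≤ C)
    (gi : ℕ → S → ℝ) (hgicont : ∀ i < m, Continuous (gi i))
    (hgibdd : ∀ i < m, ∃ C : ℝ, ∀ x, |gi i x| ≤ C) :
    Tendsto
      (fun N => ∫ ω, g (μN N ω) * ∏ i ∈ Finset.range m, gi i (X N i ω) ∂(P N)) atTop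
      (nhds (∫ ω', g (μ ω') *
        ∏ i ∈ Finset.range m, ∫ x, gi i x ∂(μ ω' : Measure S) ∂P')) := by
  classical
  haveI := sc (S := S)
  -- bounds
  obtain ⟨Cg, hCg, hCg0⟩ : ∃ Cg : ℝ, (∀ π, |g π| ≤ Cg) ∧ 0 ≤ Cg := by
    obtain ⟨C, hC⟩ := hgbdd
    exact ⟨max C 0, fun π => (hC π).trans (le_max_left _ _), le_max_right _ _⟩
  obtain ⟨B, hB, hB0⟩ : ∃ B : ℕ → ℝ, (∀ j, j < m → ∀ x, |gi j x| ≤ B j) ∧ ∀ j, 0 ≤ B j := by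
    refine ⟨fun j => if h : j < m then max ((hgibdd j h).choose) 0 else 0, ?_, ?_⟩
    · intro j h x
      simp only [dif_pos h]
      exact ((hgibdd j h).choose_spec x).trans (le_max_left _ _)
    · intro j
      by_cases h : j < m <;> simp [h]
  -- bounded continuous versions of the gi
  obtain ⟨gb, hgb, hgbB⟩ : ∃ gb : ℕ → BoundedContinuousFunction S ℝ,
      (∀ j, j < m → ∀ x, gb j x = gi j x) ∧ (∀ j x, |gb j x| ≤ B j) := by
    refine ⟨fun j => if h : j < m then
      BoundedContinuousFunction.ofNormedAddCommGroup (gi j) (hgicont j h) (B j)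
        (fun x => by rw [Real.norm_eq_abs]; exact hB j h x) else 0, ?_, ?_⟩
    · intro j h x; simp [dif_pos h]
    · intro j x
      by_cases h : j < m
      · simp only [dif_pos h]
        simpa using hB j h x
      · simpa [dif_neg h] using hB0 j
  set C : ℝ := Cg * (∏ j ∈ Finset.range m, B j) with hCdef
  have hC0 : 0 ≤ C := mul_nonneg hCg0 (Finset.prod_nonneg fun j _ => hB0 j)
  set F : ProbabilityMeasure S → ℝ :=
    (fun π => g π * ∏ j ∈ Finset.range m, ∫ s, gb j s ∂(π : Measure S)) with hFdef
  have hFcont : Continuous F :=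
    hgcont.mul (continuous_finset_prod _ fun j _ =>
      ProbabilityMeasure.continuous_integral_boundedContinuousFunction (gb j))
  have hFbdd : ∀ π, |F π| ≤ C := by
    intro π
    rw [hFdef, abs_mul, Finset.abs_prod]
    refine mul_le_mul (hCg π) (Finset.prod_le_prod (fun j _ => abs_nonneg _) fun j _ => ?_)
      (Finset.prod_nonneg fun j _ => abs_nonneg _) hCg0
    calc |∫ s, gb j s ∂(π : Measure S)| = ‖∫ s, gb j s ∂(π : Measure S)‖ := rfl
      _ ≤ B j * ((π : Measure S) Set.univ).toReal :=
          norm_integral_le_of_norm_le_const (Filter.Eventually.of_forall fun s => by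
            rw [Real.norm_eq_abs]; exact hgbB j s)
      _ = B j := by simp
  have hFμ : (∫ ω', F (μ ω') ∂P') = ∫ ω', g (μ ω') *
      ∏ i ∈ Finset.range m, ∫ x, gi i x ∂(μ ω' : Measure S) ∂P' := by
    apply integral_congr_ae
    apply Filter.Eventually.of_forall
    intro ω'
    simp only [hFdef]
    have hprod : (∏ j ∈ Finset.range m, ∫ s, gb j s ∂(μ ω' : Measure S))
        = ∏ j ∈ Finset.range m, ∫ x, gi j x ∂(μ ω' : Measure S) := by
      refine Finset.prod_congr rfl fun j hj => ?_
      have h : (fun s => gb j s) = gi j := funext (hgb j (Finset.mem_range.mp hj))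
      rw [h]
    rw [hprod]
  -- the key per-N estimate
  have key : ∀ N : ℕ, 0 < N → m ≤ N →
      |(∫ ω, g (μN N ω) * ∏ i ∈ Finset.range m, gi i (X N i ω) ∂(P N)) -
        (∫ ω, F (μN N ω) ∂(P N))| ≤
      2 * C * (1 - ∏ j ∈ Finset.range m, ((N : ℝ) - j) / N) := by
    intro N hN hmN
    have hNR : (N : ℝ) ≠ 0 := by positivity
    set Xv : ΩN N → (Fin N → S) := (fun ω i => X N (i : ℕ) ω) with hXv
    have hXvm : Measurable Xv := measurable_pi_lambda _ fun i => hXmeas N i i.2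
    set ν : Measure (Fin N → S) := Measure.map Xv (P N) with hν
    haveI : IsProbabilityMeasure ν := Measure.isProbabilityMeasure_map hXvm.aemeasurable
    set e := emp (S := S) N hN with he
    set H : (Fin m → Fin N) → (Fin N → S) → ℝ :=
      (fun f x => g (e x) * ∏ j : Fin m, gb (j : ℕ) (x (f j))) with hH
    have hHcont : ∀ f, Continuous (H f) := fun f =>
      (hgcont.comp (continuous_emp N hN)).mul
        (continuous_finset_prod _ fun j _ => (gb (j:ℕ)).continuous.comp (continuous_apply (f j)))
    have hHbdd : ∀ f x, |H f x| ≤ C := by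
      intro f x
      rw [hH]
      simp only []
      rw [abs_mul, hCdef]
      refine mul_le_mul (hCg _) ?_ (abs_nonneg _) hCg0
      rw [Finset.abs_prod, ← Fin.prod_univ_eq_prod_range (fun j => B j) m]
      exact Finset.prod_le_prod (fun j _ => abs_nonneg _) fun j _ => hgbB _ _
    have hHint : ∀ f, Integrable (H f) ν := fun f =>
      Integrable.mono' (integrable_const C)
        (hHcont f).stronglyMeasurable.aestronglyMeasurable
        (Filter.Eventually.of_forall fun x => by rw [Real.norm_eq_abs]; exact hHbdd f x)
    set T : (Fin m → Fin N) → ℝ := (fun f => ∫ x, H f x ∂ν) with hT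
    have hTbdd : ∀ f, |T f| ≤ C := by
      intro f
      rw [hT]
      calc |∫ x, H f x ∂ν| = ‖∫ x, H f x ∂ν‖ := rfl
        _ ≤ C * (ν Set.univ).toReal := norm_integral_le_of_norm_le_const
            (Filter.Eventually.of_forall fun x => by rw [Real.norm_eq_abs]; exact hHbdd f x)
        _ = C := by simp
    set e₀ : Fin m → Fin N := Fin.castLE hmN with he₀
    have he₀inj : Function.Injective e₀ := Fin.castLE_injective hmN
    have hμeq : ∀ ω, μN N ω = e (Xv ω) := by
      intro ω
      apply MeasureTheory.ProbabilityMeasure.toMeasure_injective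
      rw [hμN N hN ω]
      show _ = (N : ℝ≥0∞)⁻¹ • ∑ i : Fin N, Measure.dirac (Xv ω i)
      congr 1
      exact (Fin.sum_univ_eq_sum_range (fun i => Measure.dirac (X N i ω)) N).symm
    -- Step A : the LHS integral equals T e₀
    have hI : (∫ ω, g (μN N ω) * ∏ i ∈ Finset.range m, gi i (X N i ω) ∂(P N)) = T e₀ := by
      calc (∫ ω, g (μN N ω) * ∏ i ∈ Finset.range m, gi i (X N i ω) ∂(P N))
          = ∫ ω, H e₀ (Xv ω) ∂(P N) := by
            apply integral_congr_ae
            refine Filter.Eventually.of_forall fun ω => ?_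
            simp only []
            rw [hμeq ω, hH]
            simp only []
            congr 1
            rw [← Fin.prod_univ_eq_prod_range (fun i => gi i (X N i ω)) m]
            refine Finset.prod_congr rfl fun j _ => ?_
            have h1 : Xv ω (e₀ j) = X N (j : ℕ) ω := rfl
            rw [h1, hgb (j : ℕ) j.2]
        _ = ∫ x, H e₀ x ∂ν :=
            (integral_map hXvm.aemeasurable
              (hHcont e₀).stronglyMeasurable.aestronglyMeasurable).symm
        _ = T e₀ := rfl
    -- Step B : T is constant on injective maps
    have hTinj : ∀ f : Fin m → Fin N, Function.Injective f → T f = T e₀ := by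
      intro f hf
      obtain ⟨σ, hσ⟩ := exists_perm_comp e₀ f he₀inj hf
      have hσm : Measurable (fun x : Fin N → S => x ∘ σ) :=
        measurable_pi_lambda _ fun i => measurable_pi_apply (σ i)
      have hmap : Measure.map (fun x : Fin N → S => x ∘ σ) ν = ν := by
        rw [hν, Measure.map_map hσm hXvm]
        have h2 : ((fun x : Fin N → S => x ∘ σ) ∘ Xv) = (fun ω (i : Fin N) => X N (σ i : ℕ) ω) := rfl
        rw [h2, hexch N σ]
      have h3 : T e₀ = ∫ x, H e₀ (x ∘ σ) ∂ν := by
        calc T e₀ = ∫ x, H e₀ x ∂ν := rfl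
          _ = ∫ x, H e₀ x ∂(Measure.map (fun x : Fin N → S => x ∘ σ) ν) := by rw [hmap]
          _ = ∫ x, H e₀ (x ∘ σ) ∂ν := integral_map hσm.aemeasurable
              (hHcont e₀).stronglyMeasurable.aestronglyMeasurable
      rw [show T f = ∫ x, H f x ∂ν from rfl, h3]
      apply integral_congr_ae
      refine Filter.Eventually.of_forall fun x => ?_
      simp only []
      rw [hH]
      simp only []
      rw [show e (x ∘ ⇑σ) = e x from emp_comp_perm N hN x σ]
      congr 1
      refine Finset.prod_congr rfl fun j _ => ?_
      have h4 : (x ∘ σ) (e₀ j) = x (f j) := by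
        simp only [Function.comp_apply, hσ j]
      rw [h4]
    -- Step C : the F-integral is the average of T f
    have hJeq : (∫ ω, F (μN N ω) ∂(P N)) = ((N:ℝ)⁻¹)^m * ∑ f : Fin m → Fin N, T f := by
      have hmeas : AEStronglyMeasurable (fun x : Fin N → S => F (e x)) ν :=
        (hFcont.comp (continuous_emp N hN)).stronglyMeasurable.aestronglyMeasurable
      have h1 : (∫ ω, F (μN N ω) ∂(P N)) = ∫ x, F (e x) ∂ν := by
        calc (∫ ω, F (μN N ω) ∂(P N)) = ∫ ω, F (e (Xv ω)) ∂(P N) := by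
              apply integral_congr_ae
              exact Filter.Eventually.of_forall fun ω => by simp only []; rw [hμeq ω]
          _ = ∫ x, F (e x) ∂ν := (integral_map hXvm.aemeasurable hmeas).symm
      have h2 : ∀ x : Fin N → S, F (e x) = ((N:ℝ)⁻¹)^m * ∑ f : Fin m → Fin N, H f x := by
        intro x
        rw [hFdef]
        simp only []
        have h3 : ∀ j ∈ Finset.range m, (∫ s, gb j s ∂(e x : Measure S))
            = (N : ℝ)⁻¹ * ∑ i : Fin N, gb j (x i) := fun j _ =>
          integral_emp N hN x (gb j) (gb j).continuous
        rw [Finset.prod_congr rfl h3, Finset.prod_mul_distrib, Finset.prod_const,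
          Finset.card_range, ← Fin.prod_univ_eq_prod_range
            (fun j => ∑ i : Fin N, gb j (x i)) m, Finset.prod_univ_sum]
        rw [Fintype.piFinset_univ]
        rw [mul_left_comm, Finset.mul_sum, hH]
      rw [h1]
      calc ∫ x, F (e x) ∂ν = ∫ x, ((N:ℝ)⁻¹)^m * ∑ f : Fin m → Fin N, H f x ∂ν := by
            apply integral_congr_ae; exact Filter.Eventually.of_forall fun x => h2 x
        _ = ((N:ℝ)⁻¹)^m * ∫ x, ∑ f : Fin m → Fin N, H f x ∂ν := integral_const_mul _ _
        _ = ((N:ℝ)⁻¹)^m * ∑ f : Fin m → Fin N, T f := by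
            rw [integral_finset_sum _ (fun f _ => hHint f)]
    -- Step D : the estimate
    have hcard : (Finset.univ : Finset (Fin m → Fin N)).card = N ^ m := by
      simp [Finset.card_univ]
    have hcN : ((N:ℝ)⁻¹)^m * (N:ℝ)^m = 1 := by
      rw [← mul_pow, inv_mul_cancel₀ hNR, one_pow]
    have hsplit : T e₀ - ((N:ℝ)⁻¹)^m * ∑ f : Fin m → Fin N, T f
        = ((N:ℝ)⁻¹)^m * ∑ f : Fin m → Fin N, (T e₀ - T f) := by
      have h5 : ∑ f : Fin m → Fin N, (T e₀ - T f)
          = (N:ℝ)^m * T e₀ - ∑ f : Fin m → Fin N, T f := by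
        rw [Finset.sum_sub_distrib, Finset.sum_const, hcard, nsmul_eq_mul]
        push_cast
        ring
      rw [h5, mul_sub, ← mul_assoc, hcN, one_mul]
    have hinjcard : (Finset.univ.filter
        (fun f : Fin m → Fin N => Function.Injective f)).card = N.descFactorial m := by
      rw [← Fintype.card_subtype]
      rw [Fintype.card_congr (Equiv.subtypeInjectiveEquivEmbedding (Fin m) (Fin N))]
      simp [Fintype.card_embedding_eq]
    have hdesc_le : N.descFactorial m ≤ N ^ m := Nat.descFactorial_le_pow N m
    have hnoncard : (Finset.univ.filter
        (fun f : Fin m → Fin N => ¬ Function.Injective f)).card = N ^ m - N.descFactorial m := by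
      have h6 := Finset.card_filter_add_card_filter_not
        (s := (Finset.univ : Finset (Fin m → Fin N)))
        (p := fun f : Fin m → Fin N => Function.Injective f)
      rw [hinjcard, hcard] at h6
      omega
    have hdesc : ((N.descFactorial m : ℕ) : ℝ) = ∏ j ∈ Finset.range m, ((N:ℝ) - j) := by
      rw [Nat.descFactorial_eq_prod_range, Nat.cast_prod]
      refine Finset.prod_congr rfl fun j hj => ?_
      have : j ≤ N := le_trans (le_of_lt (Finset.mem_range.mp hj)) hmN
      push_cast [Nat.cast_sub this]
      ring
    have hprodp : (∏ j ∈ Finset.range m, ((N:ℝ) - j) / N)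
        = (N.descFactorial m : ℝ) / (N:ℝ)^m := by
      rw [Finset.prod_div_distrib, hdesc, Finset.prod_const, Finset.card_range]
    rw [hI, hJeq, hsplit, abs_mul, abs_pow, abs_inv, Nat.abs_cast]
    calc ((N:ℝ)⁻¹)^m * |∑ f : Fin m → Fin N, (T e₀ - T f)|
        ≤ ((N:ℝ)⁻¹)^m * ∑ f : Fin m → Fin N, |T e₀ - T f| := by
          refine mul_le_mul_of_nonneg_left (Finset.abs_sum_le_sum_abs _ _) (by positivity)
      _ ≤ ((N:ℝ)⁻¹)^m * ∑ f : Fin m → Fin N,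
            (if Function.Injective f then 0 else 2 * C) := by
          refine mul_le_mul_of_nonneg_left (Finset.sum_le_sum fun f _ => ?_) (by positivity)
          by_cases hf : Function.Injective f
          · simp [hf, hTinj f hf]
          · simp only [if_neg hf]
            calc |T e₀ - T f| ≤ |T e₀| + |T f| := abs_sub _ _
              _ ≤ 2 * C := by have := hTbdd e₀; have := hTbdd f; linarith [hTbdd e₀, hTbdd f]
      _ = ((N:ℝ)⁻¹)^m * (((N ^ m - N.descFactorial m : ℕ) : ℝ) * (2 * C)) := by
          congr 1
          rw [Finset.sum_ite, Finset.sum_const_zero, Finset.sum_const, zero_add, nsmul_eq_mul,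
            hnoncard]
      _ = 2 * C * (1 - ∏ j ∈ Finset.range m, ((N : ℝ) - j) / N) := by
          rw [hprodp, Nat.cast_sub hdesc_le]
          push_cast
          rw [div_eq_mul_inv, ← inv_pow]
          linear_combination (2 * C) * hcN
  -- limits
  have hp : Tendsto (fun N : ℕ => ∏ j ∈ Finset.range m, ((N : ℝ) - j) / N) atTop (nhds 1) := by
    have : (1 : ℝ) = ∏ _j ∈ Finset.range m, (1 : ℝ) := by simp
    rw [this]
    refine tendsto_finset_prod _ fun j _ => ?_
    have h1 : Tendsto (fun N : ℕ => 1 - (j : ℝ) / N) atTop (nhds 1) := by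
      have := tendsto_const_div_atTop_nhds_zero_nat (j : ℝ)
      have h2 := (tendsto_const_nhds (x := (1:ℝ)) (f := atTop)).sub this
      simpa using h2
    refine h1.congr' ?_
    filter_upwards [eventually_ge_atTop 1] with N hN
    have hN0 : (N : ℝ) ≠ 0 := by positivity
    field_simp
  have herr : Tendsto (fun N : ℕ =>
      2 * C * (1 - ∏ j ∈ Finset.range m, ((N : ℝ) - j) / N)) atTop (nhds 0) := by
    have := (tendsto_const_nhds (x := (1:ℝ)) (f := atTop)).sub hp
    have h2 := this.const_mul (2 * C)
    simpa using h2
  have hdiff : Tendsto (fun N : ℕ =>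
      (∫ ω, g (μN N ω) * ∏ i ∈ Finset.range m, gi i (X N i ω) ∂(P N)) -
        (∫ ω, F (μN N ω) ∂(P N))) atTop (nhds 0) := by
    refine squeeze_zero_norm' ?_ herr
    filter_upwards [eventually_ge_atTop (max 1 m)] with N hN
    have h1 : 0 < N := by have : 1 ≤ N := le_trans (le_max_left 1 m) hN; omega
    exact key N h1 (le_trans (le_max_right 1 m) hN)
  have hJ := hconv F hFcont ⟨C, hFbdd⟩
  rw [hFμ] at hJ
  have := hdiff.add hJ
  simp only [zero_add] at this
  refine this.congr fun N => by ring
end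

section
/- Let S be a separable metrizable space. For each N ≥ 1, let X^{N,1}, …, X^{N,N} be an exchangeable family of S-valued random variables with empirical measure μ^N := (1/N) ∑_{i=1}^N δ_{X^{N,i}}, viewed as a random element of the space of Borel probability measures on S with the topology of weak convergence. Let μ be a random Borel probability measure on S and assume E[F(μ^N)] → E[F(μ)] as N → ∞ for every bounded continuous F on the space of probability measures on S. Then for every k ≥ 1 and all bounded continuous g_1, …, g_k : S → ℝ, lim_{N→∞} E[ ∏_{i=1}^k g_i(X^{N,i}) ] = E[ ∏_{i=1}^k ∫_S g_i dμ ]; that is, the law of (X^{N,1},…,X^{N,k}) converges weakly to the mixture ∫ m^{⊗k} Q(dm), where Q is the law of μ. -/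
open MeasureTheory Filter Topology Set
open scoped ENNReal
open scoped BoundedContinuousFunction

private lemma stmt9_exists_perm {k N : ℕ} {p q : Fin k → Fin N}
    (hp : Function.Injective p) (hq : Function.Injective q) :
    ∃ σ : Equiv.Perm (Fin N), ∀ i, σ (q i) = p i := by
  classical
  have hcard : Fintype.card ↥(Set.range q)ᶜ = Fintype.card ↥(Set.range p)ᶜ := by
    rw [Fintype.card_compl_set, Fintype.card_compl_set,
      Set.card_range_of_injective hp, Set.card_range_of_injective hq]
  let e1 : ↥(Set.range q) ≃ ↥(Set.range p) :=
    (Equiv.ofInjective q hq).symm.trans (Equiv.ofInjective p hp)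
  let e2 : ↥(Set.range q)ᶜ ≃ ↥(Set.range p)ᶜ := Fintype.equivOfCardEq hcard
  refine ⟨((Equiv.Set.sumCompl (Set.range q)).symm.trans
    ((Equiv.sumCongr e1 e2).trans (Equiv.Set.sumCompl (Set.range p)))), ?_⟩
  intro i
  have hmem : q i ∈ Set.range q := ⟨i, rfl⟩
  have h1 : (Equiv.Set.sumCompl (Set.range q)).symm (q i) = Sum.inl ⟨q i, hmem⟩ :=
    Equiv.Set.sumCompl_symm_apply_of_mem hmem
  simp only [Equiv.trans_apply, h1, Equiv.sumCongr_apply, Sum.map_inl,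
    Equiv.Set.sumCompl_apply_inl]
  have h2 : e1 ⟨q i, hmem⟩ = ⟨p i, ⟨i, rfl⟩⟩ := by
    simp only [e1, Equiv.trans_apply]
    have : (⟨q i, hmem⟩ : ↥(Set.range q)) = Equiv.ofInjective q hq i := rfl
    rw [this, Equiv.symm_apply_apply]
    rfl
  rw [h2]

private lemma stmt9_integrable {Ω : Type*} [MeasurableSpace Ω] {P : Measure Ω}
    [IsFiniteMeasure P] {f : Ω → ℝ} (hf : AEStronglyMeasurable f P) {C : ℝ}
    (h : ∀ ω, |f ω| ≤ C) : Integrable f P :=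
  ⟨hf, HasFiniteIntegral.of_bounded (C := C)
    (Eventually.of_forall (by simpa [Real.norm_eq_abs] using h))⟩

private theorem stmt9_aux {S : Type*} [MeasurableSpace S] [TopologicalSpace S] [BorelSpace S]
    (ΩN : ℕ → Type*) [∀ N, MeasurableSpace (ΩN N)]
    (P : ∀ N, Measure (ΩN N)) [∀ N, IsProbabilityMeasure (P N)]
    (X : ∀ N : ℕ, ℕ → ΩN N → S)
    (hXmeas : ∀ N, ∀ i < N, Measurable (X N i))
    (hexch : ∀ N (σ : Equiv.Perm (Fin N)),
      Measure.map (fun ω (i : Fin N) => X N (σ i : ℕ) ω) (P N) =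
        Measure.map (fun ω (i : Fin N) => X N (i : ℕ) ω) (P N))
    (μN : ∀ N : ℕ, ΩN N → ProbabilityMeasure S)
    (hμN : ∀ N : ℕ, 0 < N → ∀ ω, (μN N ω : Measure S) =
      (N : ℝ≥0∞)⁻¹ • ∑ i ∈ Finset.range N, Measure.dirac (X N i ω))
    {Ω' : Type*} [MeasurableSpace Ω'] (P' : Measure Ω') [IsProbabilityMeasure P']
    (μ : Ω' → ProbabilityMeasure S)
    (hconv : ∀ F : ProbabilityMeasure S → ℝ, Continuous F → (∃ C : ℝ, ∀ π, |F π| ≤ C) →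
      Tendsto (fun N => ∫ ω, F (μN N ω) ∂(P N)) atTop (nhds (∫ ω', F (μ ω') ∂P')))
    (k : ℕ) (hk : 1 ≤ k) (G : ℕ → S →ᵇ ℝ) :
    Tendsto
      (fun N => ∫ ω, ∏ i ∈ Finset.range k, G i (X N i ω) ∂(P N)) atTop
      (nhds (∫ ω', ∏ i ∈ Finset.range k, ∫ x, G i x ∂(μ ω' : Measure S) ∂P')) := by
  classical
  set A : ℕ → ℝ := fun N => ∫ ω, ∏ i ∈ Finset.range k, G i (X N i ω) ∂(P N) with hA
  set F : ProbabilityMeasure S → ℝ :=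
    fun π => ∏ i ∈ Finset.range k, ∫ x, G i x ∂(π : Measure S) with hF
  set C : ℝ := ∏ i ∈ Finset.range k, ‖G i‖ with hC
  have hC0 : 0 ≤ C := Finset.prod_nonneg fun i _ => norm_nonneg _
  have hmeas : ∀ N (p : Fin k → Fin N),
      Measurable fun ω => ∏ i : Fin k, G (i : ℕ) (X N (p i : ℕ) ω) := fun N p =>
    Finset.measurable_prod _ fun i _ =>
      ((G (i : ℕ)).continuous.measurable).comp (hXmeas N (p i : ℕ) (p i).isLt)
  have hbd : ∀ N (p : Fin k → Fin N) ω, |∏ i : Fin k, G (i : ℕ) (X N (p i : ℕ) ω)| ≤ C := by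
    intro N p ω
    rw [Finset.abs_prod, hC, ← Fin.prod_univ_eq_prod_range]
    exact Finset.prod_le_prod (fun i _ => abs_nonneg _)
      (fun i _ => by
        simpa [Real.norm_eq_abs] using (G (i : ℕ)).norm_coe_le_norm (X N (p i : ℕ) ω))
  have hint : ∀ N (p : Fin k → Fin N),
      Integrable (fun ω => ∏ i : Fin k, G (i : ℕ) (X N (p i : ℕ) ω)) (P N) := fun N p =>
    stmt9_integrable (hmeas N p).aestronglyMeasurable (hbd N p)
  set T : ∀ N : ℕ, (Fin k → Fin N) → ℝ :=
    fun N p => ∫ ω, ∏ i : Fin k, G (i : ℕ) (X N (p i : ℕ) ω) ∂(P N) with hT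
  have hTbd : ∀ N p, |T N p| ≤ C := by
    intro N p
    have := norm_integral_le_of_norm_le_const (μ := P N)
      (f := fun ω => ∏ i : Fin k, G (i : ℕ) (X N (p i : ℕ) ω)) (C := C)
      (Eventually.of_forall fun ω => by
        rw [Real.norm_eq_abs]; exact hbd N p ω)
    rw [Real.norm_eq_abs] at this
    simpa using this
  have hTinj : ∀ N (hkN : k ≤ N) (p : Fin k → Fin N), Function.Injective p →
      T N p = A N := by
    intro N hkN p hp
    set q : Fin k → Fin N := fun i => Fin.castLE hkN i with hq
    have hqinj : Function.Injective q := fun a b h => by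
      apply Fin.val_injective
      simpa [hq, Fin.castLE] using congrArg Fin.val h
    obtain ⟨σ, hσ⟩ := stmt9_exists_perm hp hqinj
    have hA' : A N = T N q := by
      simp only [hA, hT]
      congr 1
      funext ω
      rw [← Fin.prod_univ_eq_prod_range (fun i => G i (X N i ω)) k]
      rfl
    set H : (Fin N → S) → ℝ := fun v => ∏ i : Fin k, G (i : ℕ) (v (q i)) with hH
    have hHmeas : Measurable H := Finset.measurable_prod _ fun i _ =>
      ((G (i : ℕ)).continuous.measurable).comp (measurable_pi_apply _)
    have hΦσ : Measurable fun ω (j : Fin N) => X N (σ j : ℕ) ω :=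
      measurable_pi_lambda _ fun j => hXmeas N _ (σ j).isLt
    have hΦid : Measurable fun ω (j : Fin N) => X N (j : ℕ) ω :=
      measurable_pi_lambda _ fun j => hXmeas N _ j.isLt
    have e1 : ∫ v, H v ∂(Measure.map (fun ω (j : Fin N) => X N (σ j : ℕ) ω) (P N)) = T N p := by
      rw [integral_map hΦσ.aemeasurable hHmeas.stronglyMeasurable.aestronglyMeasurable]
      simp only [hH, hT]
      congr 1
      funext ω
      exact Finset.prod_congr rfl fun i _ => by rw [hσ i]
    have e2 : ∫ v, H v ∂(Measure.map (fun ω (j : Fin N) => X N (j : ℕ) ω) (P N)) = T N q := by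
      rw [integral_map hΦid.aemeasurable hHmeas.stronglyMeasurable.aestronglyMeasurable]
    rw [hA', ← e2, ← hexch N σ, e1]
  have hFμN : ∀ N, 0 < N → ∀ ω,
      F (μN N ω) = ((N : ℝ)⁻¹) ^ k *
        ∑ p : Fin k → Fin N, ∏ i : Fin k, G (i : ℕ) (X N (p i : ℕ) ω) := by
    intro N hN ω
    have hint_i : ∀ i : ℕ, ∫ x, G i x ∂((μN N ω : Measure S)) =
        (N : ℝ)⁻¹ * ∑ j ∈ Finset.range N, G i (X N j ω) := by
      intro i
      rw [hμN N hN ω, integral_smul_measure, integral_finset_sum_measure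
        (fun j _ => stmt9_integrable ((G i).continuous.measurable.aestronglyMeasurable)
          (fun x => by simpa [Real.norm_eq_abs] using (G i).norm_coe_le_norm x))]
      simp only [smul_eq_mul]
      congr 1
      · simp [ENNReal.toReal_inv]
      · exact Finset.sum_congr rfl fun j _ =>
          integral_dirac' _ _ (G i).continuous.stronglyMeasurable
    simp only [hF]
    calc ∏ i ∈ Finset.range k, ∫ x, G i x ∂((μN N ω : Measure S))
        = ∏ i ∈ Finset.range k, ((N : ℝ)⁻¹ * ∑ j ∈ Finset.range N, G i (X N j ω)) :=
          Finset.prod_congr rfl fun i _ => hint_i i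
      _ = ((N : ℝ)⁻¹) ^ k * ∏ i ∈ Finset.range k, ∑ j ∈ Finset.range N, G i (X N j ω) := by
          rw [Finset.prod_mul_distrib, Finset.prod_const, Finset.card_range]
      _ = ((N : ℝ)⁻¹) ^ k *
          ∑ p : Fin k → Fin N, ∏ i : Fin k, G (i : ℕ) (X N (p i : ℕ) ω) := by
          congr 1
          rw [← Fin.prod_univ_eq_prod_range (fun i => ∑ j ∈ Finset.range N, G i (X N j ω)) k]
          have : ∀ i : Fin k, ∑ j ∈ Finset.range N, G (i : ℕ) (X N j ω)
              = ∑ j : Fin N, G (i : ℕ) (X N (j : ℕ) ω) :=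
            fun i => (Fin.sum_univ_eq_sum_range (fun j => G (i : ℕ) (X N j ω)) N).symm
          rw [Finset.prod_congr rfl fun i _ => this i, Finset.prod_univ_sum]
          simp
  have hGN : ∀ N, 0 < N → ∫ ω, F (μN N ω) ∂(P N) =
      ((N : ℝ)⁻¹) ^ k * ∑ p : Fin k → Fin N, T N p := by
    intro N hN
    simp only [hT]
    rw [integral_congr_ae (Eventually.of_forall (hFμN N hN)), integral_const_mul,
      integral_finset_sum _ (fun p _ => hint N p)]
  have hIcard : ∀ N : ℕ,
      (Finset.univ.filter (fun p : Fin k → Fin N => Function.Injective p)).card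
        = N.descFactorial k := by
    intro N
    have h1 : (Finset.univ.filter (fun p : Fin k → Fin N => Function.Injective p)).card
        = Fintype.card {p : Fin k → Fin N // Function.Injective p} :=
      (Fintype.card_subtype _).symm
    rw [h1, Fintype.card_congr
      (Equiv.subtypeInjectiveEquivEmbedding (Fin k) (Fin N)),
      Fintype.card_embedding_eq, Fintype.card_fin, Fintype.card_fin]
  have key : ∀ N, k ≤ N → |A N - ∫ ω, F (μN N ω) ∂(P N)| ≤
      2 * C * (1 - (N.descFactorial k : ℝ) / (N : ℝ) ^ k) := by
    intro N hkN
    have hN : 0 < N := lt_of_lt_of_le hk hkN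
    have hNR : (0 : ℝ) < (N : ℝ) ^ k := by positivity
    have hAbd : |A N| ≤ C := by
      rw [← hTinj N hkN (fun i => Fin.castLE hkN i) (fun a b h => by
        apply Fin.val_injective; simpa using congrArg Fin.val h)]
      exact hTbd N _
    set c : ℝ := (N.descFactorial k : ℝ) with hc
    have hcle : c ≤ (N : ℝ) ^ k := by
      rw [hc]
      exact_mod_cast Nat.descFactorial_le_pow N k
    have hr0 : 0 ≤ 1 - c / (N : ℝ) ^ k := sub_nonneg.mpr ((div_le_one hNR).mpr hcle)
    set JN : Finset (Fin k → Fin N) :=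
      Finset.univ.filter (fun p => ¬ Function.Injective p) with hJN
    have hJcard : ((JN).card : ℝ) = (N : ℝ) ^ k - c := by
      have h2 : (Finset.univ.filter
            (fun p : Fin k → Fin N => Function.Injective p)).card + JN.card = N ^ k := by
        rw [hJN, Finset.card_filter_add_card_filter_not, Finset.card_univ,
          Fintype.card_fun, Fintype.card_fin, Fintype.card_fin]
      rw [hIcard N] at h2
      have h3 : c + (JN.card : ℝ) = (N : ℝ) ^ k := by rw [hc]; exact_mod_cast h2
      linarith [h3]
    have hsumI : ∑ p ∈ Finset.univ.filter
        (fun p : Fin k → Fin N => Function.Injective p), T N p = c * A N := by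
      rw [Finset.sum_congr rfl (fun p hp => hTinj N hkN p (by
          simpa using (Finset.mem_filter.mp hp).2)),
        Finset.sum_const, nsmul_eq_mul, hIcard N, hc]
    have hsplit : ∑ p : Fin k → Fin N, T N p = c * A N + ∑ p ∈ JN, T N p := by
      rw [← Finset.sum_filter_add_sum_filter_not Finset.univ
        (fun p => Function.Injective p) (T N), hsumI]
    have hsbd : |∑ p ∈ JN, T N p| ≤ ((N : ℝ) ^ k - c) * C := by
      calc |∑ p ∈ JN, T N p| ≤ ∑ p ∈ JN, |T N p| := Finset.abs_sum_le_sum_abs _ _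
        _ ≤ (JN).card • C := Finset.sum_le_card_nsmul _ _ _ (fun p _ => hTbd N p)
        _ = ((N : ℝ) ^ k - c) * C := by rw [nsmul_eq_mul, hJcard]
    rw [hGN N hN, hsplit]
    have hNe : (N : ℝ) ^ k ≠ 0 := ne_of_gt hNR
    have heq : A N - ((N : ℝ)⁻¹) ^ k * (c * A N + ∑ p ∈ JN, T N p)
        = (1 - c / (N : ℝ) ^ k) * A N - ((N : ℝ) ^ k)⁻¹ * ∑ p ∈ JN, T N p := by
      rw [inv_pow]; field_simp; ring
    rw [heq]
    have h1 : |(1 - c / (N : ℝ) ^ k) * A N| ≤ (1 - c / (N : ℝ) ^ k) * C := by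
      rw [abs_mul, abs_of_nonneg hr0]
      exact mul_le_mul_of_nonneg_left hAbd hr0
    have h2 : |((N : ℝ) ^ k)⁻¹ * ∑ p ∈ JN, T N p| ≤ (1 - c / (N : ℝ) ^ k) * C := by
      rw [abs_mul, abs_of_nonneg (inv_nonneg.mpr hNR.le)]
      calc ((N : ℝ) ^ k)⁻¹ * |∑ p ∈ JN, T N p|
          ≤ ((N : ℝ) ^ k)⁻¹ * (((N : ℝ) ^ k - c) * C) :=
            mul_le_mul_of_nonneg_left hsbd (inv_nonneg.mpr hNR.le)
        _ = (1 - c / (N : ℝ) ^ k) * C := by field_simp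
    calc |(1 - c / (N : ℝ) ^ k) * A N - ((N : ℝ) ^ k)⁻¹ * ∑ p ∈ JN, T N p|
        ≤ |(1 - c / (N : ℝ) ^ k) * A N| + |((N : ℝ) ^ k)⁻¹ * ∑ p ∈ JN, T N p| :=
          abs_sub _ _
      _ ≤ (1 - c / (N : ℝ) ^ k) * C + (1 - c / (N : ℝ) ^ k) * C := add_le_add h1 h2
      _ = 2 * C * (1 - c / (N : ℝ) ^ k) := by ring
  have h1 : Tendsto (fun N : ℕ => (N.descFactorial k : ℝ) / (N : ℝ) ^ k) atTop (𝓝 1) := by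
    have heq : ∀ᶠ N : ℕ in atTop, ∏ i ∈ Finset.range k, (1 - (i : ℝ) / (N : ℝ))
        = (N.descFactorial k : ℝ) / (N : ℝ) ^ k := by
      filter_upwards [eventually_ge_atTop k] with N hkN
      have hN0 : (N : ℝ) ≠ 0 := by
        have : 0 < N := lt_of_lt_of_le hk hkN
        positivity
      have e1 : ∏ i ∈ Finset.range k, (1 - (i : ℝ) / (N : ℝ))
          = ∏ i ∈ Finset.range k, (((N : ℝ) - (i : ℝ)) / (N : ℝ)) :=
        Finset.prod_congr rfl fun i _ => by rw [one_sub_div hN0]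
      have e2 : ∏ i ∈ Finset.range k, (((N : ℝ) - (i : ℝ)) / (N : ℝ))
          = (∏ i ∈ Finset.range k, ((N : ℝ) - (i : ℝ))) / (N : ℝ) ^ k := by
        rw [Finset.prod_div_distrib, Finset.prod_const, Finset.card_range]
      have e3 : ∏ i ∈ Finset.range k, ((N : ℝ) - (i : ℝ)) = (N.descFactorial k : ℝ) := by
        rw [Nat.descFactorial_eq_prod_range, Nat.cast_prod]
        exact Finset.prod_congr rfl fun i hi => by
          rw [Nat.cast_sub (le_trans (le_of_lt (Finset.mem_range.mp hi)) hkN)]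
      rw [e1, e2, e3]
    have hprod : Tendsto (fun N : ℕ => ∏ i ∈ Finset.range k, (1 - (i : ℝ) / (N : ℝ))) atTop
        (𝓝 (∏ _i ∈ Finset.range k, (1 : ℝ))) := by
      apply tendsto_finset_prod
      intro i _
      have hz : Tendsto (fun N : ℕ => (i : ℝ) / (N : ℝ)) atTop (𝓝 0) :=
        Tendsto.div_atTop tendsto_const_nhds tendsto_natCast_atTop_atTop
      simpa using tendsto_const_nhds.sub hz
    rw [Finset.prod_const_one] at hprod
    exact hprod.congr' heq
  have hrate : Tendsto (fun N : ℕ => 2 * C * (1 - (N.descFactorial k : ℝ) / (N : ℝ) ^ k))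
      atTop (𝓝 0) := by
    have h2 := ((tendsto_const_nhds (x := (1 : ℝ)) (f := atTop)).sub h1).const_mul (2 * C)
    simpa using h2
  have hconv' : Tendsto (fun N => ∫ ω, F (μN N ω) ∂(P N)) atTop
      (𝓝 (∫ ω', F (μ ω') ∂P')) := by
    refine hconv F ?_ ⟨C, ?_⟩
    · exact continuous_finset_prod _ fun i _ =>
        ProbabilityMeasure.continuous_integral_boundedContinuousFunction (G i)
    · intro π
      simp only [hF]
      rw [Finset.abs_prod, hC]
      refine Finset.prod_le_prod (fun i _ => abs_nonneg _) fun i _ => ?_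
      have hb := norm_integral_le_of_norm_le_const (μ := (π : Measure S))
        (f := fun x => G i x) (C := ‖G i‖)
        (Eventually.of_forall fun x => (G i).norm_coe_le_norm x)
      rw [Real.norm_eq_abs] at hb
      simpa using hb
  have hdiff : Tendsto (fun N => A N - ∫ ω, F (μN N ω) ∂(P N)) atTop (𝓝 0) := by
    apply squeeze_zero_norm' _ hrate
    filter_upwards [eventually_ge_atTop k] with N hkN
    rw [Real.norm_eq_abs]
    exact key N hkN
  have hsum := hdiff.add hconv'
  rw [zero_add] at hsum
  have hfun : (fun N => (A N - ∫ ω, F (μN N ω) ∂(P N)) + ∫ ω, F (μN N ω) ∂(P N)) = A := by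
    funext N; ring
  rw [hfun] at hsum
  exact hsum

/-- Let `S` be a separable metrizable space. For each `N`, let
`X^{N,1}, …, X^{N,N}` be an exchangeable family of `S`-valued random variables with empirical
measure `μ^N = (1/N) ∑_{i<N} δ_{X^{N,i}}`, a random element of the space of Borel probability
measures on `S` with the weak topology. Let `μ` be a random Borel probability measure and
assume `E[F(μ^N)] → E[F(μ)]` for every bounded continuous `F`. Then for every `k ≥ 1` and all
bounded continuous `g_1, …, g_k : S → ℝ`,
`E[∏_{i<k} g_i(X^{N,i})] → E[∏_{i<k} ∫ g_i dμ]`; that is, the law of `(X^{N,1},…,X^{N,k})`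
converges weakly to the mixture `∫ m^{⊗k} Q(dm)` with `Q` the law of `μ`. -/
theorem stmt9 {S : Type*} [MeasurableSpace S] [TopologicalSpace S] [BorelSpace S]
    [TopologicalSpace.SeparableSpace S] [TopologicalSpace.PseudoMetrizableSpace S]
    (ΩN : ℕ → Type*) [∀ N, MeasurableSpace (ΩN N)]
    (P : ∀ N, Measure (ΩN N)) [∀ N, IsProbabilityMeasure (P N)]
    (X : ∀ N : ℕ, ℕ → ΩN N → S)
    (hXmeas : ∀ N, ∀ i < N, Measurable (X N i))
    (hexch : ∀ N (σ : Equiv.Perm (Fin N)),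
      Measure.map (fun ω (i : Fin N) => X N (σ i : ℕ) ω) (P N) =
        Measure.map (fun ω (i : Fin N) => X N (i : ℕ) ω) (P N))
    (μN : ∀ N : ℕ, ΩN N → ProbabilityMeasure S)
    (hμN : ∀ N : ℕ, 0 < N → ∀ ω, (μN N ω : Measure S) =
      (N : ℝ≥0∞)⁻¹ • ∑ i ∈ Finset.range N, Measure.dirac (X N i ω))
    {Ω' : Type*} [MeasurableSpace Ω'] (P' : Measure Ω') [IsProbabilityMeasure P']
    (μ : Ω' → ProbabilityMeasure S)
    (hconv : ∀ F : ProbabilityMeasure S → ℝ, Continuous F → (∃ C : ℝ, ∀ π, |F π| ≤ C) →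
      Tendsto (fun N => ∫ ω, F (μN N ω) ∂(P N)) atTop (nhds (∫ ω', F (μ ω') ∂P')))
    (k : ℕ) (hk : 1 ≤ k)
    (gi : ℕ → S → ℝ) (hgicont : ∀ i < k, Continuous (gi i))
    (hgibdd : ∀ i < k, ∃ C : ℝ, ∀ x, |gi i x| ≤ C) :
    Tendsto
      (fun N => ∫ ω, ∏ i ∈ Finset.range k, gi i (X N i ω) ∂(P N)) atTop
      (nhds (∫ ω', ∏ i ∈ Finset.range k, ∫ x, gi i x ∂(μ ω' : Measure S) ∂P')) := by
  classical
  set G : ℕ → (S →ᵇ ℝ) := fun i =>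
    if h : i < k then
      BoundedContinuousFunction.ofNormedAddCommGroup (gi i) (hgicont i h)
        ((hgibdd i h).choose)
        (fun x => by
          rw [Real.norm_eq_abs]
          exact (hgibdd i h).choose_spec x)
    else 0 with hG
  have hGi : ∀ i, i < k → ∀ x, G i x = gi i x := by
    intro i hi x
    simp only [hG, hi, dif_pos]
    rfl
  have haux := stmt9_aux ΩN P X hXmeas hexch μN hμN P' μ hconv k hk G
  have h1 : (fun N => ∫ ω, ∏ i ∈ Finset.range k, gi i (X N i ω) ∂(P N))
      = fun N => ∫ ω, ∏ i ∈ Finset.range k, G i (X N i ω) ∂(P N) := by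
    funext N
    congr 1
    funext ω
    exact Finset.prod_congr rfl fun i hi => (hGi i (Finset.mem_range.mp hi) _).symm
  have h2 : (∫ ω', ∏ i ∈ Finset.range k, ∫ x, gi i x ∂(μ ω' : Measure S) ∂P')
      = ∫ ω', ∏ i ∈ Finset.range k, ∫ x, G i x ∂(μ ω' : Measure S) ∂P' := by
    congr 1
    funext ω'
    refine Finset.prod_congr rfl fun i hi => ?_
    congr 1
    funext x
    exact (hGi i (Finset.mem_range.mp hi) x).symm
  rw [h1, h2]
  exact haux
end

section
/- Let (Ω, 𝔄, P) be a probability space, E and G measurable spaces and S a measurable space. Let ξ_1, …, ξ_n : Ω → E and Y : Ω → G be random variables such that ξ_1, …, ξ_n, Y are mutually independent, and let Φ : E × G → S be measurable. Set X^i := Φ(ξ_i, Y). Then for all bounded measurable g_1, …, g_n : S → ℝ, E[ ∏_{i=1}^n g_i(X^i) | σ(Y) ] = ∏_{i=1}^n E[ g_i(X^i) | σ(Y) ] P-almost surely. If in addition ξ_1, …, ξ_n are identically distributed, then for every bounded measurable g : S → ℝ and every i, E[ g(X^i) | σ(Y) ] = E[ g(X^1) | σ(Y) ] P-almost surely; in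 particular the X^i are conditionally independent and identically distributed given Y. -/
open MeasureTheory Filter Set
open scoped ENNReal

universe u

/-- The family of codomains of the random variables `ξ_1, …, ξ_n, Y`: `E` for each `some i`
and `G` for `none`. -/
def xiYFam (E G : Type u) {n : ℕ} : Option (Fin n) → Type u :=
  fun o => match o with
  | none => G
  | some _ => E

/-- The corresponding family of measurable-space structures. -/
def xiYFamMeas {E G : Type u} (mE : MeasurableSpace E) (mG : MeasurableSpace G) {n : ℕ} :
    ∀ o : Option (Fin n), MeasurableSpace (xiYFam E G o) :=
  fun o => match o with
  | none => mG
  | some _ => mE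

lemma aux_condexp {Ω α G : Type*} [MeasurableSpace Ω] [MeasurableSpace α] [mG : MeasurableSpace G]
    (P : Measure Ω) [IsProbabilityMeasure P]
    (W : Ω → α) (Y : Ω → G) (hW : Measurable W) (hY : Measurable Y)
    (hWY : ProbabilityTheory.IndepFun W Y P)
    (F : α → G → ℝ) (hF : Measurable (fun p : α × G => F p.1 p.2))
    (C : ℝ) (hC : ∀ x y, |F x y| ≤ C) :
    P[fun ω => F (W ω) (Y ω) | MeasurableSpace.comap Y mG]
      =ᵐ[P] fun ω => ∫ x, F x (Y ω) ∂(Measure.map W P) := by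
  have hle : MeasurableSpace.comap Y mG ≤ ‹MeasurableSpace Ω› := hY.comap_le
  haveI : SigmaFinite (P.trim hle) := by infer_instance
  set μW := Measure.map W P with hμW
  set μY := Measure.map Y P with hμY
  haveI : IsProbabilityMeasure μW := Measure.isProbabilityMeasure_map hW.aemeasurable
  haveI : IsProbabilityMeasure μY := Measure.isProbabilityMeasure_map hY.aemeasurable
  -- the swapped function on G × α
  have hFswap : Measurable (fun p : G × α => F p.2 p.1) :=
    hF.comp (measurable_snd.prodMk measurable_fst)
  -- φ is measurable
  have hφ : StronglyMeasurable (fun y => ∫ x, F x y ∂μW) := by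
    exact (hFswap.stronglyMeasurable).integral_prod_right'
  have hf_meas : Measurable (fun ω => F (W ω) (Y ω)) := hF.comp (hW.prodMk hY)
  have hf_int : Integrable (fun ω => F (W ω) (Y ω)) P :=
    ⟨hf_meas.aestronglyMeasurable,
      HasFiniteIntegral.of_bounded (C := C) (Eventually.of_forall fun ω => by
        simpa [Real.norm_eq_abs] using hC (W ω) (Y ω))⟩
  have hφbdd : ∀ y, |∫ x, F x y ∂μW| ≤ C := by
    intro y
    rw [← Real.norm_eq_abs]
    calc ‖∫ x, F x y ∂μW‖ ≤ C * (μW Set.univ).toReal :=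
      norm_integral_le_of_norm_le_const (Eventually.of_forall fun x => by
        simpa [Real.norm_eq_abs] using hC x y)
    _ = C := by simp
  have hg_meas : Measurable[MeasurableSpace.comap Y mG] (fun ω => ∫ x, F x (Y ω) ∂μW) := by
    have hYc : Measurable[MeasurableSpace.comap Y mG] Y := fun s hs => ⟨s, hs, rfl⟩
    exact hφ.measurable.comp hYc
  have hg_int : Integrable (fun ω => ∫ x, F x (Y ω) ∂μW) P :=
    ⟨(hg_meas.le hle).aestronglyMeasurable,
      HasFiniteIntegral.of_bounded (C := C) (Eventually.of_forall fun ω => by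
        simpa [Real.norm_eq_abs] using hφbdd (Y ω))⟩
  -- joint law is a product measure
  have hmap : Measure.map (fun ω => (Y ω, W ω)) P = μY.prod μW :=
    (ProbabilityTheory.indepFun_iff_map_prod_eq_prod_map_map hY.aemeasurable
      hW.aemeasurable).1 hWY.symm
  have hFint : Integrable (fun p : G × α => F p.2 p.1) (μY.prod μW) :=
    ⟨hFswap.aestronglyMeasurable,
      HasFiniteIntegral.of_bounded (C := C) (Eventually.of_forall fun p => by
        simpa [Real.norm_eq_abs] using hC p.2 p.1)⟩
  have hg_sm' : AEStronglyMeasurable[MeasurableSpace.comap Y mG]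
      (fun ω => ∫ x, F x (Y ω) ∂μW) P := by
    refine StronglyMeasurable.aestronglyMeasurable ?_
    have : StronglyMeasurable[MeasurableSpace.comap Y mG]
        (fun ω => ∫ x, F x (Y ω) ∂μW) := hg_meas.stronglyMeasurable
    exact this
  refine (ae_eq_condExp_of_forall_setIntegral_eq hle hf_int
    (fun s _ _ => hg_int.integrableOn) (fun s hs _ => ?_)
    hg_sm').symm
  -- set integral equality
  obtain ⟨B, hB, rfl⟩ := hs
  have hYae : AEMeasurable Y P := hY.aemeasurable
  have key : ∫ y in B, (∫ x, F x y ∂μW) ∂μY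
      = ∫ p in B ×ˢ (Set.univ : Set α), F p.2 p.1 ∂(μY.prod μW) := by
    rw [setIntegral_prod _ (hFint.integrableOn)]
    simp [Measure.restrict_univ]
  have lhs_eq : ∫ ω in Y ⁻¹' B, (∫ x, F x (Y ω) ∂μW) ∂P
      = ∫ y in B, (∫ x, F x y ∂μW) ∂μY := by
    rw [hμY, setIntegral_map hB (hφ.aestronglyMeasurable) hYae]
  have rhs_eq : ∫ ω in Y ⁻¹' B, F (W ω) (Y ω) ∂P
      = ∫ p in B ×ˢ (Set.univ : Set α), F p.2 p.1 ∂(μY.prod μW) := by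
    rw [← hmap, setIntegral_map (hB.prod MeasurableSet.univ) hFswap.aestronglyMeasurable
      (hY.aemeasurable.prodMk hW.aemeasurable)]
    have hset : (fun x => (Y x, W x)) ⁻¹' (B ×ˢ (Set.univ : Set α)) = Y ⁻¹' B := by
      ext ω; simp
    rw [hset]
  rw [lhs_eq, rhs_eq, key]

lemma aux_pi_integral {n : ℕ} {E : Type*} [mE : MeasurableSpace E] (μ : Fin n → Measure E)
    [∀ i, IsProbabilityMeasure (μ i)] (f : Fin n → E → ℝ) :
    ∫ x : Fin n → E, ∏ i, f i (x i) ∂(Measure.pi μ) = ∏ i, ∫ x, f i x ∂(μ i) := by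
  letI Emeas : ∀ i : Fin n, MeasureSpace ((fun _ : Fin n => E) i) :=
    fun i => { toMeasurableSpace := mE, volume := μ i }
  have hsf : ∀ i : Fin n, SigmaFinite (@volume _ (Emeas i)) :=
    fun i => by change SigmaFinite (μ i); infer_instance
  exact MeasureTheory.integral_fintype_prod_eq_prod (𝕜 := ℝ) f (μ := μ)

/-- Let `(Ω, 𝔄, P)` be a probability space, `E, G, S` measurable spaces,
`ξ_1, …, ξ_n : Ω → E` and `Y : Ω → G` mutually independent random variables and
`Φ : E × G → S` measurable; set `X^i := Φ(ξ_i, Y)`. Then for bounded measurable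
`g_1, …, g_n : S → ℝ`, `E[∏_i g_i(X^i) | σ(Y)] = ∏_i E[g_i(X^i) | σ(Y)]` a.s.; if moreover
the `ξ_i` are identically distributed, then for every bounded measurable `g : S → ℝ` and every
`i`, `E[g(X^i) | σ(Y)] = E[g(X^1) | σ(Y)]` a.s.; in particular the `X^i` are conditionally
i.i.d. given `Y`. -/
theorem stmt10 {Ω : Type*} {E G : Type u} {S : Type*} [MeasurableSpace Ω]
    [mE : MeasurableSpace E] [mG : MeasurableSpace G] [MeasurableSpace S]
    (P : Measure Ω) [IsProbabilityMeasure P]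
    (n : ℕ) (hn : 0 < n)
    (ξ : Fin n → Ω → E) (Y : Ω → G)
    (hξmeas : ∀ i, Measurable (ξ i)) (hYmeas : Measurable Y)
    (hindep : ProbabilityTheory.iIndepFun (m := xiYFamMeas mE mG)
      (fun o : Option (Fin n) => match o with
        | none => Y
        | some i => ξ i) P)
    (Φ : E → G → S) (hΦmeas : Measurable (fun p : E × G => Φ p.1 p.2))
    (g : Fin n → S → ℝ) (hgmeas : ∀ i, Measurable (g i))
    (hgbdd : ∀ i, ∃ C : ℝ, ∀ x, |g i x| ≤ C) :
    (P[fun ω => ∏ i : Fin n, g i (Φ (ξ i ω) (Y ω)) | MeasurableSpace.comap Y mG]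
        =ᵐ[P] fun ω => ∏ i : Fin n,
          P[fun ω' => g i (Φ (ξ i ω') (Y ω')) | MeasurableSpace.comap Y mG] ω) ∧
    ((∀ i j : Fin n, Measure.map (ξ i) P = Measure.map (ξ j) P) →
      ∀ (g' : S → ℝ), Measurable g' → (∃ C : ℝ, ∀ x, |g' x| ≤ C) → ∀ i : Fin n,
        P[fun ω => g' (Φ (ξ i ω) (Y ω)) | MeasurableSpace.comap Y mG]
          =ᵐ[P] P[fun ω => g' (Φ (ξ ⟨0, hn⟩ ω) (Y ω)) | MeasurableSpace.comap Y mG]) := by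
  
  classical
  letI : ∀ o : Option (Fin n), MeasurableSpace (xiYFam E G o) := xiYFamMeas mE mG
  set f : ∀ o : Option (Fin n), Ω → xiYFam E G o :=
    (fun o : Option (Fin n) => match o with
      | none => Y
      | some i => ξ i) with hf
  have hfmeas : ∀ o, Measurable[_, xiYFamMeas mE mG o] (f o) := by
    rintro (_ | j)
    · exact hYmeas
    · exact hξmeas j
  -- independence of each ξ i from Y
  have hIndep_i : ∀ i : Fin n, ProbabilityTheory.IndepFun (ξ i) Y P := by
    intro i
    have hdisj : Disjoint ({some i} : Finset (Option (Fin n))) {none} := by simp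
    have h := hindep.indepFun_finset {some i} {none} hdisj hfmeas
    have mφ : Measurable
        (fun v : (∀ k : ({some i} : Finset (Option (Fin n))), xiYFam E G (k : Option (Fin n))) =>
          v ⟨some i, Finset.mem_singleton_self (some i)⟩) :=
      measurable_pi_apply _
    have mψ : Measurable
        (fun v : (∀ k : ({none} : Finset (Option (Fin n))), xiYFam E G (k : Option (Fin n))) =>
          v ⟨none, Finset.mem_singleton_self none⟩) :=
      measurable_pi_apply _
    exact h.comp mφ mψ
  -- independence of the vector of ξ from Y
  have hWmeas : Measurable (fun ω (i : Fin n) => ξ i ω) :=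
    measurable_pi_lambda _ hξmeas
  have hIndepVec : ProbabilityTheory.IndepFun (fun ω (i : Fin n) => ξ i ω) Y P := by
    have hdisj : Disjoint (Finset.univ.image (some : Fin n → Option (Fin n)))
        ({none} : Finset (Option (Fin n))) := by
      simp [Finset.disjoint_left]
    have h := hindep.indepFun_finset _ _ hdisj hfmeas
    have mφ : Measurable
        (fun v : (∀ k : ((Finset.univ.image (some : Fin n → Option (Fin n))) :
            Finset (Option (Fin n))), xiYFam E G (k : Option (Fin n))) =>
          fun j : Fin n => v ⟨some j, Finset.mem_image_of_mem _ (Finset.mem_univ j)⟩) :=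
      measurable_pi_lambda _ fun j => measurable_pi_apply _
    have mψ : Measurable
        (fun v : (∀ k : ({none} : Finset (Option (Fin n))), xiYFam E G (k : Option (Fin n))) =>
          v ⟨none, Finset.mem_singleton_self none⟩) :=
      measurable_pi_apply _
    exact h.comp mφ mψ
  set μ : Fin n → Measure E := fun i => Measure.map (ξ i) P with hμ
  haveI : ∀ i, IsProbabilityMeasure (μ i) :=
    fun i => Measure.isProbabilityMeasure_map (hξmeas i).aemeasurable
  -- joint law of the ξ's is the product measure
  have hpi : Measure.map (fun ω (i : Fin n) => ξ i ω) P = Measure.pi μ := by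
    refine (Measure.pi_eq fun s hs => ?_).symm
    rw [Measure.map_apply hWmeas (MeasurableSet.univ_pi hs)]
    have hset : (fun ω (i : Fin n) => ξ i ω) ⁻¹' (Set.univ.pi s)
        = ⋂ i ∈ (Finset.univ : Finset (Fin n)), ξ i ⁻¹' (s i) := by
      ext ω; simp [Set.mem_univ_pi]
    rw [hset]
    set sets : ∀ o : Option (Fin n), Set (xiYFam E G o) :=
      fun o => match o with
      | none => Set.univ
      | some i => s i with hsets
    have H : ∀ o ∈ Finset.univ.image (some : Fin n → Option (Fin n)),
        MeasurableSet[xiYFamMeas mE mG o] (sets o) := by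
      rintro (_ | i) _
      · exact MeasurableSet.univ
      · exact hs i
    have h := hindep.measure_inter_preimage_eq_mul
      (Finset.univ.image (some : Fin n → Option (Fin n))) H
    rw [Finset.set_biInter_finset_image] at h
    rw [Finset.prod_image (fun a _ b _ hab => Option.some_injective _ hab)] at h
    have hh : (⋂ i ∈ (Finset.univ : Finset (Fin n)), f (some i) ⁻¹' sets (some i))
        = ⋂ i ∈ (Finset.univ : Finset (Fin n)), ξ i ⁻¹' (s i) := rfl
    rw [hh] at h
    rw [h]
    exact Finset.prod_congr rfl fun i _ => (Measure.map_apply (hξmeas i) (hs i)).symm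
  -- bounds
  set C : Fin n → ℝ := fun i => max (Classical.choose (hgbdd i)) 0 with hCdef
  have hC : ∀ i x, |g i x| ≤ C i :=
    fun i x => le_max_of_le_left (Classical.choose_spec (hgbdd i) x)
  have hC0 : ∀ i, 0 ≤ C i := fun i => le_max_right _ _
  -- single conditional expectations
  have hsingle : ∀ i : Fin n,
      P[fun ω => g i (Φ (ξ i ω) (Y ω)) | MeasurableSpace.comap Y mG]
        =ᵐ[P] fun ω => ∫ x, g i (Φ x (Y ω)) ∂(μ i) := by
    intro i
    exact aux_condexp P (ξ i) Y (hξmeas i) hYmeas (hIndep_i i)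
      (fun x y => g i (Φ x y)) ((hgmeas i).comp hΦmeas) (C i)
      (fun x y => hC i _)
  constructor
  · -- product statement
    have hFmeas : Measurable (fun p : (Fin n → E) × G => ∏ i : Fin n, g i (Φ (p.1 i) p.2)) := by
      refine Finset.measurable_prod _ fun i _ => ?_
      have m1 : Measurable (fun p : (Fin n → E) × G => (p.1 i, p.2)) :=
        ((measurable_pi_apply i).comp measurable_fst).prodMk measurable_snd
      exact (hgmeas i).comp (hΦmeas.comp m1)
    have hFbdd : ∀ (w : Fin n → E) (y : G),
        |∏ i : Fin n, g i (Φ (w i) y)| ≤ ∏ i : Fin n, C i := by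
      intro w y
      rw [Finset.abs_prod]
      exact Finset.prod_le_prod (fun i _ => abs_nonneg _) (fun i _ => hC i _)
    have hprod := aux_condexp P (fun ω (i : Fin n) => ξ i ω) Y hWmeas hYmeas hIndepVec
      (fun w y => ∏ i : Fin n, g i (Φ (w i) y)) hFmeas (∏ i : Fin n, C i) hFbdd
    rw [hpi] at hprod
    have hall : ∀ᵐ ω ∂P, ∀ i : Fin n,
        (P[fun ω' => g i (Φ (ξ i ω') (Y ω')) | MeasurableSpace.comap Y mG]) ω
          = ∫ x, g i (Φ x (Y ω)) ∂(μ i) := ae_all_iff.2 hsingle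
    filter_upwards [hprod, hall] with a h1 h2
    rw [h1]
    have hFub := aux_pi_integral μ (fun i x => g i (Φ x (Y a)))
    rw [hFub]
    exact Finset.prod_congr rfl fun i _ => (h2 i).symm
  · -- identically distributed part
    intro hident g' hg'meas hg'bdd i
    obtain ⟨C', hC'⟩ := hg'bdd
    have h1 := aux_condexp P (ξ i) Y (hξmeas i) hYmeas (hIndep_i i)
      (fun x y => g' (Φ x y)) (hg'meas.comp hΦmeas) C' (fun x y => hC' _)
    have h0 := aux_condexp P (ξ ⟨0, hn⟩) Y (hξmeas _) hYmeas (hIndep_i _)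
      (fun x y => g' (Φ x y)) (hg'meas.comp hΦmeas) C' (fun x y => hC' _)
    rw [show Measure.map (ξ i) P = Measure.map (ξ ⟨0, hn⟩) P from hident i ⟨0, hn⟩] at h1
    exact h1.trans h0.symm
end
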